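/- arXiv:2209.08804 — 2 statements merged into one kernel-verified Lean document; each statement's English description precedes it below -/
import Mathlib

section
/- Let H be a 3-edge-connected cubic graph containing a triangle T such that the graph H/T obtained by contracting T to a single vertex is simple and 3-edge-connected. Then F(H) = F(H/T). -/
namespace Frank

variable {V : Type*}

/-- An orientation of a simple graph `G`: each edge gets exactly one direction. -/
structure Orient (G : SimpleGraph V) where
  dir : V → V → Prop
  dir_iff : ∀ u v, (dir u v ∨ dir v u) ↔ G.Adj u v
  not_both : ∀ u v, dir u v → ¬ dir v u

/-- A relation (digraph) is strongly connected. -/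
def IsStrong (r : V → V → Prop) : Prop :=
  ∀ x y : V, Relation.ReflTransGen r x y

/-- Delete the single arc `(u,v)` from the digraph `r`. -/
def delArc (r : V → V → Prop) (u v : V) : V → V → Prop :=
  fun a b => r a b ∧ ¬(a = u ∧ b = v)

/-- Delete (both possible arcs of) the edge `uv` from the digraph `r`. -/
def delEdge (r : V → V → Prop) (u v : V) : V → V → Prop :=
  fun a b => r a b ∧ ¬((a = u ∧ b = v) ∨ (a = v ∧ b = u))

/-- The edge `uv` is deletable in the orientation `O`: after removing its arc the
orientation stays strongly connected. -/
def EdgeDeletable {G : SimpleGraph V} (O : Orient G) (u v : V) : Prop :=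
  IsStrong (delEdge O.dir u v)

/-- The Frank number of `G`: the least `k` admitting `k` strongly connected orientations
such that every edge is deletable in at least one of them. -/
noncomputable def frankNumber (G : SimpleGraph V) : ℕ :=
  sInf {k | ∃ Os : Fin k → Orient G, (∀ i, IsStrong (Os i).dir) ∧
    ∀ u v, G.Adj u v → ∃ i, EdgeDeletable (Os i) u v}

/-- `G` is 2-edge-connected: connected and stays connected after deleting any single edge. -/
def TwoEdgeConn (G : SimpleGraph V) : Prop :=
  G.Connected ∧ ∀ e : Sym2 V, (G.deleteEdges {e}).Connected

/-- `G` is 3-edge-connected: connected and stays connected after deleting any two edges. -/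
def ThreeEdgeConn (G : SimpleGraph V) : Prop :=
  G.Connected ∧ ∀ e f : Sym2 V, (G.deleteEdges {e, f}).Connected

/-- The underlying relation of the local cubic modification of `G` at `v`:
`v` is replaced by a cycle on `ZMod d`, and `m` matches the cycle vertices to
the former neighbours of `v`. -/
def lcmRel (G : SimpleGraph V) (v : V) (d : ℕ) (m : ZMod d → V) :
    ({w : V // w ≠ v} ⊕ ZMod d) → ({w : V // w ≠ v} ⊕ ZMod d) → Prop
  | Sum.inl w, Sum.inl w' => G.Adj w.1 w'.1
  | Sum.inl w, Sum.inr i => w.1 = m i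
  | Sum.inr i, Sum.inr j => j = i + 1
  | Sum.inr _, Sum.inl _ => False

/-- The local cubic modification `G_v(M)` of `G` at `v` given the matching `m`. -/
def localCubicMod (G : SimpleGraph V) (v : V) (d : ℕ) (m : ZMod d → V) :
    SimpleGraph ({w : V // w ≠ v} ⊕ ZMod d) :=
  SimpleGraph.fromRel (lcmRel G v d m)

/-! ### auxiliary -/

section Aux

lemma isStrong_mono {r s : V → V → Prop} (h : ∀ a b, r a b → s a b) (hr : IsStrong r) :
    IsStrong s := fun x y => Relation.ReflTransGen.mono h _ _ (hr x y)

lemma isStrong_congr {r s : V → V → Prop} (h : ∀ a b, r a b ↔ s a b) :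
    IsStrong r ↔ IsStrong s :=
  ⟨isStrong_mono fun a b => (h a b).1, isStrong_mono fun a b => (h a b).2⟩

lemma rtg_of_step2 {α : Type*} {t : α → α → Prop} {i j : α}
    (h : i = j ∨ t i j ∨ ∃ k, t i k ∧ t k j) : Relation.ReflTransGen t i j := by
  rcases h with rfl | h | ⟨k, h1, h2⟩
  · exact .refl
  · exact .single h
  · exact (Relation.ReflTransGen.single h1).tail h2

lemma delEdge_comm {r : V → V → Prop} (u w : V) : delEdge r u w = delEdge r w u := by
  funext a b
  simp only [delEdge, eq_iff_iff]
  tauto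

variable {G : SimpleGraph V} {v : V} {m : ZMod 3 → V}

section Basic

lemma adj_vm (hr : Set.range m = G.neighborSet v) (j : ZMod 3) : G.Adj v (m j) := by
  have : m j ∈ Set.range m := ⟨j, rfl⟩
  rw [hr] at this; exact this

lemma mv_ne (hr : Set.range m = G.neighborSet v) (j : ZMod 3) : m j ≠ v := (adj_vm hr j).ne'

lemma exists_idx (hr : Set.range m = G.neighborSet v) {a : V} (ha : G.Adj a v) : ∃ j, m j = a := by
  have : a ∈ Set.range m := by rw [hr]; exact ha.symm
  exact this

lemma adj_inl_inl {a b : {w : V // w ≠ v}} :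
    (localCubicMod G v 3 m).Adj (Sum.inl a) (Sum.inl b) ↔ G.Adj a.1 b.1 := by
  rw [localCubicMod, SimpleGraph.fromRel_adj]
  constructor
  · rintro ⟨-, h | h⟩
    · exact h
    · exact h.symm
  · intro h
    refine ⟨?_, Or.inl h⟩
    intro he
    cases he
    exact G.irrefl h

lemma adj_inl_inr {a : {w : V // w ≠ v}} {j : ZMod 3} :
    (localCubicMod G v 3 m).Adj (Sum.inl a) (Sum.inr j) ↔ a.1 = m j := by
  rw [localCubicMod, SimpleGraph.fromRel_adj]
  constructor
  · rintro ⟨-, h | h⟩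
    · exact h
    · exact h.elim
  · intro h
    exact ⟨by simp, Or.inl h⟩

lemma adj_inr_inr {i j : ZMod 3} :
    (localCubicMod G v 3 m).Adj (Sum.inr i) (Sum.inr j) ↔ i ≠ j := by
  rw [localCubicMod, SimpleGraph.fromRel_adj]
  constructor
  · rintro ⟨hne, -⟩
    intro h; exact hne (by rw [h])
  · intro h
    refine ⟨by simpa using h, ?_⟩
    show j = i + 1 ∨ i = j + 1
    revert h; revert i j; decide

lemma adj_cases {x y : ({w : V // w ≠ v} ⊕ ZMod 3)} (h : (localCubicMod G v 3 m).Adj x y) :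
    (∃ a b, x = Sum.inl a ∧ y = Sum.inl b ∧ G.Adj a.1 b.1) ∨
    (∃ a j, x = Sum.inl a ∧ y = Sum.inr j ∧ a.1 = m j) ∨
    (∃ a j, x = Sum.inr j ∧ y = Sum.inl a ∧ a.1 = m j) ∨
    (∃ i j, x = Sum.inr i ∧ y = Sum.inr j ∧ i ≠ j) := by
  match x, y with
  | Sum.inl a, Sum.inl b => exact Or.inl ⟨a, b, rfl, rfl, (adj_inl_inl).1 h⟩
  | Sum.inl a, Sum.inr j => exact Or.inr (Or.inl ⟨a, j, rfl, rfl, (adj_inl_inr).1 h⟩)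
  | Sum.inr j, Sum.inl a => exact Or.inr (Or.inr (Or.inl ⟨a, j, rfl, rfl, (adj_inl_inr).1 h.symm⟩))
  | Sum.inr i, Sum.inr j => exact Or.inr (Or.inr (Or.inr ⟨i, j, rfl, rfl, (adj_inr_inr).1 h⟩))

end Basic

end Aux

section Ext

variable {G : SimpleGraph V} {v : V} {m : ZMod 3 → V}

/-- Extension of a digraph on `V` to the truncation vertex set. -/
def extDir (v : V) (m : ZMod 3 → V) (r : V → V → Prop) (t : ZMod 3 → ZMod 3 → Prop) :
    ({w : V // w ≠ v} ⊕ ZMod 3) → ({w : V // w ≠ v} ⊕ ZMod 3) → Prop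
  | Sum.inl a, Sum.inl b => r a.1 b.1
  | Sum.inl a, Sum.inr j => a.1 = m j ∧ r a.1 v
  | Sum.inr j, Sum.inl a => a.1 = m j ∧ r v a.1
  | Sum.inr i, Sum.inr j => t i j

/-- Gadget condition: the triangle orientation `t` is compatible with the arcs of `r` at `v`. -/
def Gd (v : V) (m : ZMod 3 → V) (r : V → V → Prop) (t : ZMod 3 → ZMod 3 → Prop) : Prop :=
  (∀ i j, r (m i) v → r v (m j) → Relation.ReflTransGen t i j) ∧
  (∀ j, ∃ i, r (m i) v ∧ Relation.ReflTransGen t i j) ∧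
  (∀ i, ∃ j, r v (m j) ∧ Relation.ReflTransGen t i j)

lemma Gd_sameAtV {r r' : V → V → Prop} {t : ZMod 3 → ZMod 3 → Prop}
    (h : Gd v m r t) (hin : ∀ x, r' x v ↔ r x v) (hout : ∀ x, r' v x ↔ r v x) :
    Gd v m r' t := by
  obtain ⟨h1, h2, h3⟩ := h
  refine ⟨fun i j hi hj => h1 i j ((hin _).1 hi) ((hout _).1 hj), ?_, ?_⟩
  · intro j; obtain ⟨i, hi, hre⟩ := h2 j; exact ⟨i, (hin _).2 hi, hre⟩
  · intro i; obtain ⟨j, hj, hre⟩ := h3 i; exact ⟨j, (hout _).2 hj, hre⟩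

lemma ext_strong (hr : Set.range m = G.neighborSet v)
    {r : V → V → Prop} {t : ZMod 3 → ZMod 3 → Prop}
    (hadj : ∀ a b, r a b → G.Adj a b) (hstrong : IsStrong r)
    (hGd : Gd v m r t) :
    IsStrong (extDir v m r t) := by
  obtain ⟨hG1, hG2, hG3⟩ := hGd
  set E := extDir v m r t with hE
  have tlift : ∀ {i j}, Relation.ReflTransGen t i j →
      Relation.ReflTransGen E (Sum.inr i) (Sum.inr j) := fun h =>
    Relation.ReflTransGen.lift Sum.inr (fun a b hab => hab) _ _ h
  have key : ∀ (u c : V), Relation.ReflTransGen r u c → ∀ (hu : u ≠ v),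
      (∀ (hc : c ≠ v), Relation.ReflTransGen E (Sum.inl ⟨u, hu⟩) (Sum.inl ⟨c, hc⟩)) ∧
      (c = v → ∀ j', (∀ i, r (m i) v → Relation.ReflTransGen t i j') →
        Relation.ReflTransGen E (Sum.inl ⟨u, hu⟩) (Sum.inr j')) := by
    intro u c h hu
    induction h with
    | refl =>
      exact ⟨fun hc => .refl, fun hc => absurd hc hu⟩
    | @tail b c hub hbc ih =>
      constructor
      · intro hc
        by_cases hb : b = v
        · subst hb
          obtain ⟨j, hjc⟩ := exists_idx hr (hadj _ _ hbc).symm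
          have p1 := ih.2 rfl j (fun i hi => hG1 i j hi (by rw [hjc]; exact hbc))
          exact p1.tail (show E (Sum.inr j) (Sum.inl ⟨c, hc⟩) from ⟨hjc.symm, hbc⟩)
        · exact (ih.1 hb).tail (show E (Sum.inl ⟨b, hb⟩) (Sum.inl ⟨c, hc⟩) from hbc)
      · intro hcv j' hj'
        rw [hcv] at hbc
        have hb : b ≠ v := (hadj _ _ hbc).ne
        obtain ⟨i, hib⟩ := exists_idx hr (hadj _ _ hbc)
        have p1 := ih.1 hb
        have arc : E (Sum.inl ⟨b, hb⟩) (Sum.inr i) := ⟨hib.symm, hbc⟩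
        have p2 := hj' i (by rw [hib]; exact hbc)
        exact (p1.tail arc).trans (tlift p2)
  have toInl : ∀ (a b : {w : V // w ≠ v}),
      Relation.ReflTransGen E (Sum.inl a) (Sum.inl b) := fun a b =>
    (key a.1 b.1 (hstrong _ _) a.2).1 b.2
  have toInr : ∀ (a : {w : V // w ≠ v}) (j : ZMod 3),
      Relation.ReflTransGen E (Sum.inl a) (Sum.inr j) := by
    intro a j
    obtain ⟨i0, hi0, hreach⟩ := hG2 j
    have h1 := toInl a ⟨m i0, mv_ne hr i0⟩
    have arc : E (Sum.inl ⟨m i0, mv_ne hr i0⟩) (Sum.inr i0) := ⟨rfl, hi0⟩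
    exact (h1.tail arc).trans (tlift hreach)
  have fromInr : ∀ (i : ZMod 3) (b : {w : V // w ≠ v}),
      Relation.ReflTransGen E (Sum.inr i) (Sum.inl b) := by
    intro i b
    obtain ⟨j, hj, hreach⟩ := hG3 i
    have arc : E (Sum.inr j) (Sum.inl ⟨m j, mv_ne hr j⟩) := ⟨rfl, hj⟩
    exact ((tlift hreach).tail arc).trans (toInl _ b)
  intro x y
  match x, y with
  | Sum.inl a, Sum.inl b => exact toInl a b
  | Sum.inl a, Sum.inr j => exact toInr a j
  | Sum.inr i, Sum.inl b => exact fromInr i b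
  | Sum.inr i, Sum.inr j => exact (fromInr i ⟨m 0, mv_ne hr 0⟩).trans (toInr _ j)

/-- The extension as an orientation of the truncation. -/
def extOrient (hm : Function.Injective m) (hr : Set.range m = G.neighborSet v)
    (O : Orient G) (t : ZMod 3 → ZMod 3 → Prop)
    (ht1 : ∀ i j, (t i j ∨ t j i) ↔ i ≠ j) (ht2 : ∀ i j, t i j → ¬ t j i) :
    Orient (localCubicMod G v 3 m) where
  dir := extDir v m O.dir t
  dir_iff := by
    rintro (a | i) (b | j)
    · show (O.dir a.1 b.1 ∨ O.dir b.1 a.1) ↔ _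
      rw [O.dir_iff, adj_inl_inl]
    · show ((a.1 = m j ∧ O.dir a.1 v) ∨ (a.1 = m j ∧ O.dir v a.1)) ↔ _
      rw [adj_inl_inr]
      constructor
      · rintro (⟨h, -⟩ | ⟨h, -⟩) <;> exact h
      · intro h
        have : O.dir a.1 v ∨ O.dir v a.1 := (O.dir_iff a.1 v).2 (by rw [h]; exact (adj_vm hr j).symm)
        rcases this with h' | h'
        · exact Or.inl ⟨h, h'⟩
        · exact Or.inr ⟨h, h'⟩
    · show ((b.1 = m i ∧ O.dir v b.1) ∨ (b.1 = m i ∧ O.dir b.1 v)) ↔ _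
      rw [SimpleGraph.adj_comm, adj_inl_inr]
      constructor
      · rintro (⟨h, -⟩ | ⟨h, -⟩) <;> exact h
      · intro h
        have : O.dir b.1 v ∨ O.dir v b.1 := (O.dir_iff b.1 v).2 (by rw [h]; exact (adj_vm hr i).symm)
        rcases this with h' | h'
        · exact Or.inr ⟨h, h'⟩
        · exact Or.inl ⟨h, h'⟩
    · show (t i j ∨ t j i) ↔ _
      rw [adj_inr_inr, ht1]
  not_both := by
    rintro (a | i) (b | j)
    · exact fun h h' => O.not_both _ _ h h'
    · rintro ⟨h1, h2⟩ ⟨h3, h4⟩; exact O.not_both _ _ h2 h4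
    · rintro ⟨h1, h2⟩ ⟨h3, h4⟩; exact O.not_both _ _ h4 h2
    · exact ht2 i j

/-- Deleting an `inl`-`inl` edge commutes with extension (one direction). -/
lemma ext_del_inl {r : V → V → Prop} {t : ZMod 3 → ZMod 3 → Prop} (a b : {w : V // w ≠ v}) :
    ∀ x y, extDir v m (delEdge r a.1 b.1) t x y →
      delEdge (extDir v m r t) (Sum.inl a) (Sum.inl b) x y := by
  rintro (c | i) (d | j) h
  · obtain ⟨h1, h2⟩ := h
    refine ⟨h1, ?_⟩
    rintro (⟨hc, hd⟩ | ⟨hc, hd⟩)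
    · exact h2 (Or.inl ⟨by rw [Sum.inl.injEq] at hc; rw [hc], by rw [Sum.inl.injEq] at hd; rw [hd]⟩)
    · exact h2 (Or.inr ⟨by rw [Sum.inl.injEq] at hc; rw [hc], by rw [Sum.inl.injEq] at hd; rw [hd]⟩)
  · exact ⟨⟨h.1, h.2.1⟩, by rintro (⟨-, hd⟩ | ⟨-, hd⟩) <;> exact nomatch hd⟩
  · exact ⟨⟨h.1, h.2.1⟩, by rintro (⟨hc, -⟩ | ⟨hc, -⟩) <;> exact nomatch hc⟩
  · exact ⟨h, by rintro (⟨hc, -⟩ | ⟨hc, -⟩) <;> exact nomatch hc⟩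

/-- Deleting a pendant edge commutes with extension (one direction). -/
lemma ext_del_pendant {r : V → V → Prop} {t : ZMod 3 → ZMod 3 → Prop}
    (a : {w : V // w ≠ v}) (j : ZMod 3) (haj : a.1 = m j) :
    ∀ x y, extDir v m (delEdge r (m j) v) t x y →
      delEdge (extDir v m r t) (Sum.inl a) (Sum.inr j) x y := by
  rintro (c | i) (d | j') h
  · exact ⟨h.1, by rintro (⟨-, hd⟩ | ⟨hc, -⟩) <;> contradiction⟩
  · obtain ⟨h1, h2, h3⟩ := h
    refine ⟨⟨h1, h2⟩, ?_⟩
    rintro (⟨hc, hd⟩ | ⟨hc, -⟩)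
    · rw [Sum.inl.injEq] at hc; rw [Sum.inr.injEq] at hd
      exact h3 (Or.inl ⟨by rw [hc]; exact haj, rfl⟩)
    · exact nomatch hc
  · obtain ⟨h1, h2, h3⟩ := h
    refine ⟨⟨h1, h2⟩, ?_⟩
    rintro (⟨hc, -⟩ | ⟨hc, hd⟩)
    · exact nomatch hc
    · rw [Sum.inr.injEq] at hc; rw [Sum.inl.injEq] at hd
      exact h3 (Or.inr ⟨rfl, by rw [hd]; exact haj⟩)
  · exact ⟨h, by rintro (⟨hc, -⟩ | ⟨-, hd⟩) <;> contradiction⟩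

/-- Deleting a triangle edge commutes with extension (one direction). -/
lemma ext_del_tri {r : V → V → Prop} {t : ZMod 3 → ZMod 3 → Prop} (p q : ZMod 3) :
    ∀ x y, extDir v m r (delEdge t p q) x y →
      delEdge (extDir v m r t) (Sum.inr p) (Sum.inr q) x y := by
  rintro (c | i) (d | j) h
  · exact ⟨h, by rintro (⟨hc, -⟩ | ⟨hc, -⟩) <;> exact nomatch hc⟩
  · exact ⟨h, by rintro (⟨hc, -⟩ | ⟨hc, -⟩) <;> exact nomatch hc⟩
  · exact ⟨h, by rintro (⟨-, hd⟩ | ⟨-, hd⟩) <;> exact nomatch hd⟩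
  · obtain ⟨h1, h2⟩ := h
    refine ⟨h1, ?_⟩
    rintro (⟨hc, hd⟩ | ⟨hc, hd⟩)
    · rw [Sum.inr.injEq] at hc hd; exact h2 (Or.inl ⟨hc, hd⟩)
    · rw [Sum.inr.injEq] at hc hd; exact h2 (Or.inr ⟨hc, hd⟩)

end Ext


section Gadget

/-- Cyclic orientation of the triangle through `x → y → z → x`. -/
def cyc (x y z : ZMod 3) : ZMod 3 → ZMod 3 → Prop := fun i j =>
  (i = x ∧ j = y) ∨ (i = y ∧ j = z) ∨ (i = z ∧ j = x)

/-- Source–sink orientation of the triangle: arcs `s → w`, `s → t₀`, `w → t₀`. -/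
def swt (s w t₀ : ZMod 3) : ZMod 3 → ZMod 3 → Prop := fun i j =>
  (i = s ∧ j ≠ s) ∨ (i = w ∧ j = t₀)

/-- Reachability in at most two steps. -/
def step2 (t : ZMod 3 → ZMod 3 → Prop) (i j : ZMod 3) : Prop :=
  i = j ∨ t i j ∨ ∃ k, t i k ∧ t k j

instance (x y z i j : ZMod 3) : Decidable (cyc x y z i j) :=
  inferInstanceAs (Decidable (_ ∨ _))

instance (s w t₀ i j : ZMod 3) : Decidable (swt s w t₀ i j) :=
  inferInstanceAs (Decidable (_ ∨ _))

instance {α : Type*} (t : α → α → Prop) [∀ a b, Decidable (t a b)] [DecidableEq α]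
    (p q a b : α) : Decidable (delEdge t p q a b) :=
  inferInstanceAs (Decidable (_ ∧ _))

instance (t : ZMod 3 → ZMod 3 → Prop) [∀ a b, Decidable (t a b)] (i j : ZMod 3) :
    Decidable (step2 t i j) :=
  inferInstanceAs (Decidable (_ ∨ _))

lemma step2_rtg {t : ZMod 3 → ZMod 3 → Prop} {i j : ZMod 3} (h : step2 t i j) :
    Relation.ReflTransGen t i j := rtg_of_step2 h

/-- A permutation of `ZMod 3`. -/
def P3 (x y z : ZMod 3) : Prop := x ≠ y ∧ x ≠ z ∧ y ≠ z

instance (x y z : ZMod 3) : Decidable (P3 x y z) := inferInstanceAs (Decidable (_ ∧ _))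

lemma swt_or : ∀ s w t₀, P3 s w t₀ → ∀ i j, (swt s w t₀ i j ∨ swt s w t₀ j i) ↔ i ≠ j := by
  decide

lemma swt_nb : ∀ s w t₀, P3 s w t₀ → ∀ i j, swt s w t₀ i j → ¬ swt s w t₀ j i := by
  decide

lemma cyc_or : ∀ x y z, P3 x y z → ∀ i j, (cyc x y z i j ∨ cyc x y z j i) ↔ i ≠ j := by
  decide

lemma cyc_nb : ∀ x y z, P3 x y z → ∀ i j, cyc x y z i j → ¬ cyc x y z j i := by
  decide

lemma L1 : ∀ s w t₀ i j, P3 s w t₀ → i ≠ t₀ → j ≠ s → step2 (swt s w t₀) i j := by decide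
lemma L2 : ∀ s w t₀ j, P3 s w t₀ → step2 (swt s w t₀) s j := by decide
lemma L3 : ∀ s w t₀ i, P3 s w t₀ → step2 (swt s w t₀) i t₀ := by decide
set_option synthInstance.maxSize 1024 in
set_option maxHeartbeats 1000000 in
lemma L4 : ∀ s w t₀ i j, P3 s w t₀ → i ≠ t₀ → j ≠ s → step2 (delEdge (swt s w t₀) s t₀) i j := by
  decide
lemma L5 : ∀ s w t₀ j, P3 s w t₀ → step2 (delEdge (swt s w t₀) s t₀) s j := by decide
lemma L6 : ∀ s w t₀ i, P3 s w t₀ → step2 (delEdge (swt s w t₀) s t₀) i t₀ := by decide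
set_option synthInstance.maxSize 1024 in
set_option maxHeartbeats 1000000 in
lemma L7 : ∀ s w t₀ i j, P3 s w t₀ → i ≠ t₀ → j ≠ s → j ≠ w →
    step2 (delEdge (swt s w t₀) s w) i j := by decide
lemma L8 : ∀ s w t₀ j, P3 s w t₀ → j ≠ w → step2 (delEdge (swt s w t₀) s w) s j := by decide
lemma L9 : ∀ s w t₀ i, P3 s w t₀ → step2 (delEdge (swt s w t₀) s w) i t₀ := by decide
set_option synthInstance.maxSize 1024 in
set_option maxHeartbeats 1000000 in
lemma L10 : ∀ s w t₀ i j, P3 s w t₀ → i ≠ t₀ → i ≠ w → step2 (delEdge (swt s w t₀) w t₀) i j := by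
  decide
lemma L11 : ∀ s w t₀ j, P3 s w t₀ → step2 (delEdge (swt s w t₀) w t₀) s j := by decide
lemma L12 : ∀ s w t₀ i, P3 s w t₀ → i ≠ w → step2 (delEdge (swt s w t₀) w t₀) i t₀ := by decide
lemma L13 : ∀ x y z i j, P3 x y z → step2 (cyc x y z) i j := by decide
set_option synthInstance.maxSize 1024 in
set_option maxHeartbeats 1000000 in
lemma L14 : ∀ x y z i j, P3 x y z → i ≠ x → j ≠ y → step2 (delEdge (cyc x y z) x y) i j := by
  decide
lemma L15 : ∀ x y z j, P3 x y z → step2 (delEdge (cyc x y z) x y) y j := by decide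
lemma L16 : ∀ x y z i, P3 x y z → step2 (delEdge (cyc x y z) x y) i x := by decide

variable {G : SimpleGraph V} {v : V} {m : ZMod 3 → V}

lemma exists_into (hr : Set.range m = G.neighborSet v) {r : V → V → Prop}
    (hadj : ∀ a b, r a b → G.Adj a b) (hstrong : IsStrong r) : ∃ j, r (m j) v := by
  rcases (hstrong (m 0) v).cases_tail with h | ⟨c, -, hc⟩
  · exact absurd h.symm (mv_ne hr 0)
  · obtain ⟨j, hj⟩ := exists_idx hr (hadj _ _ hc)
    exact ⟨j, by rw [hj]; exact hc⟩

lemma exists_outof (hr : Set.range m = G.neighborSet v) {r : V → V → Prop}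
    (hadj : ∀ a b, r a b → G.Adj a b) (hstrong : IsStrong r) : ∃ j, r v (m j) := by
  rcases (hstrong v (m 0)).cases_head with h | ⟨c, hc, -⟩
  · exact absurd h (mv_ne hr 0).symm
  · obtain ⟨j, hj⟩ := exists_idx hr (hadj _ _ hc).symm
    exact ⟨j, by rw [hj]; exact hc⟩

section GdLemmas

variable {r : V → V → Prop} {s w t₀ : ZMod 3}

lemma gd_swt (hP : P3 s w t₀) (hnb : ∀ a b, r a b → ¬ r b a)
    (hs : r (m s) v) (ht : r v (m t₀)) : Gd v m r (swt s w t₀) := by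
  refine ⟨fun i j hi hj => ?_, fun j => ⟨s, hs, step2_rtg (L2 _ _ _ _ hP)⟩,
    fun i => ⟨t₀, ht, step2_rtg (L3 _ _ _ _ hP)⟩⟩
  have hit : i ≠ t₀ := fun h => hnb _ _ ht (h ▸ hi)
  have hjs : j ≠ s := fun h => hnb _ _ hs (h ▸ hj)
  exact step2_rtg (L1 _ _ _ _ _ hP hit hjs)

lemma gd_swt_delST (hP : P3 s w t₀) (hnb : ∀ a b, r a b → ¬ r b a)
    (hs : r (m s) v) (ht : r v (m t₀)) : Gd v m r (delEdge (swt s w t₀) s t₀) := by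
  refine ⟨fun i j hi hj => ?_, fun j => ⟨s, hs, step2_rtg (L5 _ _ _ _ hP)⟩,
    fun i => ⟨t₀, ht, step2_rtg (L6 _ _ _ _ hP)⟩⟩
  have hit : i ≠ t₀ := fun h => hnb _ _ ht (h ▸ hi)
  have hjs : j ≠ s := fun h => hnb _ _ hs (h ▸ hj)
  exact step2_rtg (L4 _ _ _ _ _ hP hit hjs)

lemma gd_swt_delSW (hP : P3 s w t₀) (hnb : ∀ a b, r a b → ¬ r b a)
    (hs : r (m s) v) (ht : r v (m t₀)) (hw : r (m w) v) : Gd v m r (delEdge (swt s w t₀) s w) := by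
  refine ⟨fun i j hi hj => ?_, fun j => ?_, fun i => ⟨t₀, ht, step2_rtg (L9 _ _ _ _ hP)⟩⟩
  · have hit : i ≠ t₀ := fun h => hnb _ _ ht (h ▸ hi)
    have hjs : j ≠ s := fun h => hnb _ _ hs (h ▸ hj)
    have hjw : j ≠ w := fun h => hnb _ _ hw (h ▸ hj)
    exact step2_rtg (L7 _ _ _ _ _ hP hit hjs hjw)
  · by_cases hjw : j = w
    · exact ⟨w, hw, by rw [hjw]⟩
    · exact ⟨s, hs, step2_rtg (L8 _ _ _ _ hP hjw)⟩

lemma gd_swt_delWT (hP : P3 s w t₀) (hnb : ∀ a b, r a b → ¬ r b a)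
    (hs : r (m s) v) (ht : r v (m t₀)) (hw : r v (m w)) : Gd v m r (delEdge (swt s w t₀) w t₀) := by
  refine ⟨fun i j hi hj => ?_, fun j => ⟨s, hs, step2_rtg (L11 _ _ _ _ hP)⟩, fun i => ?_⟩
  · have hit : i ≠ t₀ := fun h => hnb _ _ ht (h ▸ hi)
    have hiw : i ≠ w := fun h => hnb _ _ hw (h ▸ hi)
    exact step2_rtg (L10 _ _ _ _ _ hP hit hiw)
  · by_cases hiw : i = w
    · exact ⟨w, hw, by rw [hiw]⟩
    · exact ⟨t₀, ht, step2_rtg (L12 _ _ _ _ hP hiw)⟩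

end GdLemmas

lemma gd_cyc (hr : Set.range m = G.neighborSet v) {r : V → V → Prop} {x y z : ZMod 3}
    (hP : P3 x y z) (hadj : ∀ a b, r a b → G.Adj a b) (hstrong : IsStrong r) :
    Gd v m r (cyc x y z) := by
  obtain ⟨i0, hi0⟩ := exists_into hr hadj hstrong
  obtain ⟨j0, hj0⟩ := exists_outof hr hadj hstrong
  exact ⟨fun i j _ _ => step2_rtg (L13 _ _ _ _ _ hP),
    fun j => ⟨i0, hi0, step2_rtg (L13 _ _ _ _ _ hP)⟩,
    fun i => ⟨j0, hj0, step2_rtg (L13 _ _ _ _ _ hP)⟩⟩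

lemma gd_cyc_del {r : V → V → Prop} {x y z : ZMod 3} (hP : P3 x y z)
    (hnb : ∀ a b, r a b → ¬ r b a) (hy : r (m y) v) (hx : r v (m x)) :
    Gd v m r (delEdge (cyc x y z) x y) := by
  refine ⟨fun i j hi hj => ?_, fun j => ⟨y, hy, step2_rtg (L15 _ _ _ _ hP)⟩,
    fun i => ⟨x, hx, step2_rtg (L16 _ _ _ _ hP)⟩⟩
  have hix : i ≠ x := fun h => hnb _ _ hx (h ▸ hi)
  have hjy : j ≠ y := fun h => hnb _ _ hy (h ▸ hj)
  exact step2_rtg (L14 _ _ _ _ _ hP hix hjy)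

end Gadget


section Contract

lemma rtg_lift' {α : Type*} {β : Type*} {R : α → α → Prop} {S : β → β → Prop} (f : α → β)
    (h : ∀ a b, R a b → Relation.ReflTransGen S (f a) (f b)) {x y : α}
    (hxy : Relation.ReflTransGen R x y) : Relation.ReflTransGen S (f x) (f y) := by
  induction hxy with
  | refl => exact .refl
  | tail _ hbc ih => exact ih.trans (h _ _ hbc)

variable {G : SimpleGraph V} {v : V} {m : ZMod 3 → V}

/-- Contraction of a digraph on the truncated vertex set back to `V`. -/
def contractDir (v : V)
    (R : ({w : V // w ≠ v} ⊕ ZMod 3) → ({w : V // w ≠ v} ⊕ ZMod 3) → Prop) :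
    V → V → Prop := fun a b =>
  (∃ (ha : a ≠ v) (hb : b ≠ v), R (Sum.inl ⟨a, ha⟩) (Sum.inl ⟨b, hb⟩)) ∨
  (b = v ∧ ∃ (ha : a ≠ v) (j : ZMod 3), R (Sum.inl ⟨a, ha⟩) (Sum.inr j)) ∨
  (a = v ∧ ∃ (hb : b ≠ v) (j : ZMod 3), R (Sum.inr j) (Sum.inl ⟨b, hb⟩))

lemma contract_strong {R : ({w : V // w ≠ v} ⊕ ZMod 3) → ({w : V // w ≠ v} ⊕ ZMod 3) → Prop}
    (hst : IsStrong R) : IsStrong (contractDir v R) := by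
  have step : ∀ x y, R x y →
      Relation.ReflTransGen (contractDir v R)
        (Sum.elim (fun p => p.1) (fun _ => v) x) (Sum.elim (fun p => p.1) (fun _ => v) y) := by
    rintro (a | i) (b | j) h
    · exact .single (Or.inl ⟨a.2, b.2, h⟩)
    · exact .single (Or.inr (Or.inl ⟨rfl, a.2, j, h⟩))
    · exact .single (Or.inr (Or.inr ⟨rfl, b.2, i, h⟩))
    · exact .refl
  have lift : ∀ c : V, ∃ x, Sum.elim (fun p : {w : V // w ≠ v} => p.1) (fun _ : ZMod 3 => v) x = c := by
    intro c
    by_cases hc : c = v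
    · exact ⟨Sum.inr 0, hc.symm⟩
    · exact ⟨Sum.inl ⟨c, hc⟩, rfl⟩
  intro a b
  obtain ⟨x, hx⟩ := lift a
  obtain ⟨y, hy⟩ := lift b
  rw [← hx, ← hy]
  exact rtg_lift' _ step (hst x y)

/-- The contraction of an orientation of the truncation, as an orientation of `G`. -/
def contractOrient (hm : Function.Injective m) (hr : Set.range m = G.neighborSet v)
    (P : Orient (localCubicMod G v 3 m)) : Orient G where
  dir := contractDir v P.dir
  dir_iff := by
    have hPadj : ∀ x y, P.dir x y → (localCubicMod G v 3 m).Adj x y :=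
      fun x y h => (P.dir_iff x y).1 (Or.inl h)
    intro a b
    constructor
    · rintro ((⟨ha, hb, hP⟩ | ⟨hbv, ha, j, hP⟩ | ⟨hav, hb, j, hP⟩) |
        (⟨hb, ha, hP⟩ | ⟨hav, hb, j, hP⟩ | ⟨hbv, ha, j, hP⟩))
      · exact (adj_inl_inl).1 (hPadj _ _ hP)
      · have e1 : a = m j := (adj_inl_inr).1 (hPadj _ _ hP)
        rw [hbv, e1]; exact (adj_vm hr j).symm
      · have e1 : b = m j := (adj_inl_inr).1 (hPadj _ _ hP).symm
        rw [hav, e1]; exact adj_vm hr j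
      · exact ((adj_inl_inl).1 (hPadj _ _ hP)).symm
      · have e1 : b = m j := (adj_inl_inr).1 (hPadj _ _ hP)
        rw [hav, e1]; exact adj_vm hr j
      · have e1 : a = m j := (adj_inl_inr).1 (hPadj _ _ hP).symm
        rw [hbv, e1]; exact (adj_vm hr j).symm
    · intro hab
      by_cases ha : a = v
      · have hb : b ≠ v := by
          intro h; rw [ha, h] at hab; exact G.irrefl hab
        obtain ⟨j, hj⟩ := exists_idx hr (by rw [← ha]; exact hab.symm)
        have hAdj : (localCubicMod G v 3 m).Adj (Sum.inl ⟨b, hb⟩) (Sum.inr j) :=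
          (adj_inl_inr).2 hj.symm
        rcases (P.dir_iff _ _).2 hAdj with hP | hP
        · exact Or.inr (Or.inr (Or.inl ⟨ha, hb, j, hP⟩))
        · exact Or.inl (Or.inr (Or.inr ⟨ha, hb, j, hP⟩))
      · by_cases hb : b = v
        · obtain ⟨j, hj⟩ := exists_idx hr (by rw [← hb]; exact hab)
          have hAdj : (localCubicMod G v 3 m).Adj (Sum.inl ⟨a, ha⟩) (Sum.inr j) :=
            (adj_inl_inr).2 hj.symm
          rcases (P.dir_iff _ _).2 hAdj with hP | hP
          · exact Or.inl (Or.inr (Or.inl ⟨hb, ha, j, hP⟩))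
          · exact Or.inr (Or.inr (Or.inr ⟨hb, ha, j, hP⟩))
        · have hAdj : (localCubicMod G v 3 m).Adj (Sum.inl ⟨a, ha⟩) (Sum.inl ⟨b, hb⟩) :=
            (adj_inl_inl).2 hab
          rcases (P.dir_iff _ _).2 hAdj with hP | hP
          · exact Or.inl (Or.inl ⟨ha, hb, hP⟩)
          · exact Or.inr (Or.inl ⟨hb, ha, hP⟩)
  not_both := by
    have hPadj : ∀ x y, P.dir x y → (localCubicMod G v 3 m).Adj x y :=
      fun x y h => (P.dir_iff x y).1 (Or.inl h)
    intro a b h1 h2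
    rcases h1 with ⟨ha, hb, hP⟩ | ⟨hbv, ha, j, hP⟩ | ⟨hav, hb, j, hP⟩
    · rcases h2 with ⟨hb', ha', hP'⟩ | ⟨hav, -⟩ | ⟨hbv, -⟩
      · exact P.not_both _ _ hP hP'
      · exact ha hav
      · exact hb hbv
    · rcases h2 with ⟨hb', -, -⟩ | ⟨hav, -⟩ | ⟨-, ha', j', hP'⟩
      · exact hb' hbv
      · exact ha hav
      · have e1 : a = m j := (adj_inl_inr).1 (hPadj _ _ hP)
        have e2 : a = m j' := (adj_inl_inr).1 (hPadj _ _ hP').symm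
        have : j' = j := hm (by rw [← e1, ← e2])
        subst this
        exact P.not_both _ _ hP hP'
    · rcases h2 with ⟨-, ha', -⟩ | ⟨-, hb', j', hP'⟩ | ⟨hbv, -⟩
      · exact ha' hav
      · have e1 : b = m j := (adj_inl_inr).1 (hPadj _ _ hP).symm
        have e2 : b = m j' := (adj_inl_inr).1 (hPadj _ _ hP')
        have : j' = j := hm (by rw [← e1, ← e2])
        subst this
        exact P.not_both _ _ hP' hP
      · exact hb hbv

lemma contract_mono {R S : ({w : V // w ≠ v} ⊕ ZMod 3) → ({w : V // w ≠ v} ⊕ ZMod 3) → Prop}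
    (h : ∀ x y, R x y → S x y) :
    ∀ a b, contractDir v R a b → contractDir v S a b := by
  rintro a b (⟨ha, hb, hP⟩ | ⟨hbv, ha, j, hP⟩ | ⟨hav, hb, j, hP⟩)
  · exact Or.inl ⟨ha, hb, h _ _ hP⟩
  · exact Or.inr (Or.inl ⟨hbv, ha, j, h _ _ hP⟩)
  · exact Or.inr (Or.inr ⟨hav, hb, j, h _ _ hP⟩)

lemma contract_del_inl
    {R : ({w : V // w ≠ v} ⊕ ZMod 3) → ({w : V // w ≠ v} ⊕ ZMod 3) → Prop}
    (a b : {w : V // w ≠ v}) :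
    ∀ x y, contractDir v (delEdge R (Sum.inl a) (Sum.inl b)) x y →
      delEdge (contractDir v R) a.1 b.1 x y := by
  intro x y h
  refine ⟨contract_mono (fun _ _ hp => hp.1) _ _ h, ?_⟩
  intro hpair
  rcases h with ⟨hx', hy', hP⟩ | ⟨hbv, hx', j', hP⟩ | ⟨hav, hy', j', hP⟩
  · rcases hpair with ⟨hx, hy⟩ | ⟨hx, hy⟩
    · exact hP.2 (Or.inl ⟨by rw [Sum.inl.injEq]; exact Subtype.ext hx,
        by rw [Sum.inl.injEq]; exact Subtype.ext hy⟩)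
    · exact hP.2 (Or.inr ⟨by rw [Sum.inl.injEq]; exact Subtype.ext hx,
        by rw [Sum.inl.injEq]; exact Subtype.ext hy⟩)
  · rcases hpair with ⟨-, hy⟩ | ⟨-, hy⟩
    · exact b.2 (by rw [← hy]; exact hbv)
    · exact a.2 (by rw [← hy]; exact hbv)
  · rcases hpair with ⟨hx, -⟩ | ⟨hx, -⟩
    · exact a.2 (by rw [← hx]; exact hav)
    · exact b.2 (by rw [← hx]; exact hav)

lemma contract_del_pendant (hm : Function.Injective m)
    {R : ({w : V // w ≠ v} ⊕ ZMod 3) → ({w : V // w ≠ v} ⊕ ZMod 3) → Prop}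
    (hRadj : ∀ x y, R x y → (localCubicMod G v 3 m).Adj x y)
    (a : {w : V // w ≠ v}) (j : ZMod 3) (haj : a.1 = m j) :
    ∀ x y, contractDir v (delEdge R (Sum.inl a) (Sum.inr j)) x y →
      delEdge (contractDir v R) a.1 v x y := by
  intro x y h
  refine ⟨contract_mono (fun _ _ hp => hp.1) _ _ h, ?_⟩
  intro hpair
  rcases h with ⟨hx', hy', hP⟩ | ⟨hbv, hx', j', hP⟩ | ⟨hav, hy', j', hP⟩
  · rcases hpair with ⟨-, hy⟩ | ⟨hx, -⟩
    · exact hy' hy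
    · exact hx' hx
  · rcases hpair with ⟨hx, -⟩ | ⟨hx, -⟩
    · have e1 : x = m j' := (adj_inl_inr).1 (hRadj _ _ hP.1)
      have hj' : j' = j := hm (by rw [← e1, hx]; exact haj)
      subst hj'
      exact hP.2 (Or.inl ⟨by rw [Sum.inl.injEq]; exact Subtype.ext hx, rfl⟩)
    · exact hx' hx
  · rcases hpair with ⟨hx, -⟩ | ⟨-, hy⟩
    · exact a.2 (by rw [← hx]; exact hav)
    · have e1 : y = m j' := (adj_inl_inr).1 (hRadj _ _ hP.1).symm
      have hj' : j' = j := hm (by rw [← e1, hy]; exact haj)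
      subst hj'
      exact hP.2 (Or.inr ⟨rfl, by rw [Sum.inl.injEq]; exact Subtype.ext hy⟩)

/-- Direction A: a witness family for the truncation contracts to one for `G`. -/
lemma memA (hm : Function.Injective m) (hr : Set.range m = G.neighborSet v) {k : ℕ}
    (h : ∃ Ps : Fin k → Orient (localCubicMod G v 3 m),
      (∀ i, IsStrong (Ps i).dir) ∧
      ∀ x y, (localCubicMod G v 3 m).Adj x y → ∃ i, EdgeDeletable (Ps i) x y) :
    ∃ Os : Fin k → Orient G, (∀ i, IsStrong (Os i).dir) ∧
      ∀ u w, G.Adj u w → ∃ i, EdgeDeletable (Os i) u w := by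
  obtain ⟨Ps, hstr, hcov⟩ := h
  refine ⟨fun i => contractOrient hm hr (Ps i), fun i => contract_strong (hstr i), ?_⟩
  intro a b hab
  have hPadj : ∀ i x y, (Ps i).dir x y → (localCubicMod G v 3 m).Adj x y :=
    fun i x y h => ((Ps i).dir_iff x y).1 (Or.inl h)
  by_cases ha : a = v
  · have hb : b ≠ v := by intro h; rw [ha, h] at hab; exact G.irrefl hab
    obtain ⟨j, hj⟩ := exists_idx hr (by rw [← ha]; exact hab.symm)
    obtain ⟨i, hdel⟩ := hcov (Sum.inl ⟨b, hb⟩) (Sum.inr j) ((adj_inl_inr).2 hj.symm)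
    refine ⟨i, ?_⟩
    show IsStrong (delEdge (contractDir v (Ps i).dir) a b)
    rw [ha, delEdge_comm]
    exact isStrong_mono (contract_del_pendant hm (fun x y h => hPadj i x y h) ⟨b, hb⟩ j hj.symm)
      (contract_strong hdel)
  · by_cases hb : b = v
    · obtain ⟨j, hj⟩ := exists_idx hr (by rw [← hb]; exact hab)
      obtain ⟨i, hdel⟩ := hcov (Sum.inl ⟨a, ha⟩) (Sum.inr j) ((adj_inl_inr).2 hj.symm)
      refine ⟨i, ?_⟩
      show IsStrong (delEdge (contractDir v (Ps i).dir) a b)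
      rw [hb]
      exact isStrong_mono
        (contract_del_pendant hm (fun x y h => hPadj i x y h) ⟨a, ha⟩ j hj.symm)
        (contract_strong hdel)
    · obtain ⟨i, hdel⟩ := hcov (Sum.inl ⟨a, ha⟩) (Sum.inl ⟨b, hb⟩) ((adj_inl_inl).2 hab)
      exact ⟨i, isStrong_mono (contract_del_inl ⟨a, ha⟩ ⟨b, hb⟩) (contract_strong hdel)⟩

end Contract


section Assemble

lemma dir_adj {G : SimpleGraph V} (O : Orient G) : ∀ a b, O.dir a b → G.Adj a b :=
  fun a b h => (O.dir_iff a b).1 (Or.inl h)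

variable {G : SimpleGraph V} {v : V} {m : ZMod 3 → V}

lemma memB_assemble (hm : Function.Injective m) (hr : Set.range m = G.neighborSet v)
    {k : ℕ} (Os : Fin k → Orient G)
    (hstr : ∀ i, IsStrong (Os i).dir)
    (hcov : ∀ u w, G.Adj u w → ∃ i, EdgeDeletable (Os i) u w)
    (T : Fin k → ZMod 3 → ZMod 3 → Prop)
    (hT1 : ∀ i p q, (T i p q ∨ T i q p) ↔ p ≠ q)
    (hT2 : ∀ i p q, T i p q → ¬ T i q p)
    (hTg : ∀ i, Gd v m (Os i).dir (T i))
    (hTpen : ∀ j, ∃ i, IsStrong (delEdge (Os i).dir (m j) v) ∧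
        Gd v m (delEdge (Os i).dir (m j) v) (T i))
    (hTtri : ∀ p q : ZMod 3, p ≠ q → ∃ i, Gd v m (Os i).dir (delEdge (T i) p q)) :
    ∃ Ps : Fin k → Orient (localCubicMod G v 3 m), (∀ i, IsStrong (Ps i).dir) ∧
      ∀ x y, (localCubicMod G v 3 m).Adj x y → ∃ i, EdgeDeletable (Ps i) x y := by
  refine ⟨fun i => extOrient hm hr (Os i) (T i) (hT1 i) (hT2 i), fun i =>
    ext_strong hr (dir_adj (Os i)) (hstr i) (hTg i), ?_⟩
  intro x y hxy
  rcases adj_cases hxy with ⟨a, b, rfl, rfl, hab⟩ | ⟨a, j, rfl, rfl, haj⟩ |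
    ⟨a, j, rfl, rfl, haj⟩ | ⟨p, q, rfl, rfl, hpq⟩
  · obtain ⟨i, hdel⟩ := hcov a.1 b.1 hab
    refine ⟨i, isStrong_mono (ext_del_inl a b) (ext_strong hr
      (fun c d h => dir_adj (Os i) c d h.1) hdel ?_)⟩
    refine Gd_sameAtV (hTg i) (fun x => ⟨fun h => h.1, fun h => ⟨h, ?_⟩⟩)
      (fun x => ⟨fun h => h.1, fun h => ⟨h, ?_⟩⟩)
    · rintro (⟨-, h'⟩ | ⟨-, h'⟩)
      · exact b.2 h'.symm
      · exact a.2 h'.symm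
    · rintro (⟨h', -⟩ | ⟨h', -⟩)
      · exact a.2 h'.symm
      · exact b.2 h'.symm
  · obtain ⟨i, hstrdel, hgd⟩ := hTpen j
    exact ⟨i, isStrong_mono (ext_del_pendant a j haj) (ext_strong hr
      (fun c d h => dir_adj (Os i) c d h.1) hstrdel hgd)⟩
  · obtain ⟨i, hstrdel, hgd⟩ := hTpen j
    refine ⟨i, ?_⟩
    show IsStrong (delEdge (extDir v m (Os i).dir (T i)) (Sum.inr j) (Sum.inl a))
    rw [delEdge_comm]
    exact isStrong_mono (ext_del_pendant a j haj) (ext_strong hr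
      (fun c d h => dir_adj (Os i) c d h.1) hstrdel hgd)
  · obtain ⟨i, hgd⟩ := hTtri p q hpq
    exact ⟨i, isStrong_mono (ext_del_tri p q) (ext_strong hr
      (dir_adj (Os i)) (hstr i) hgd)⟩

/-! ### combinatorics of the three pendant copies -/

def pairEq (p q u w : ZMod 3) : Prop := (p = u ∧ q = w) ∨ (p = w ∧ q = u)

instance (p q u w : ZMod 3) : Decidable (pairEq p q u w) :=
  inferInstanceAs (Decidable (_ ∨ _))

lemma pairEq_swap {p q u w : ZMod 3} (h : pairEq p q u w) : pairEq p q w u := h.symm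

lemma gd_pair {r : V → V → Prop} {tt : ZMod 3 → ZMod 3 → Prop} {u w p q : ZMod 3}
    (h : pairEq p q u w) (hg : Gd v m r (delEdge tt u w)) : Gd v m r (delEdge tt p q) := by
  rcases h with ⟨rfl, rfl⟩ | ⟨rfl, rfl⟩
  · exact hg
  · rw [delEdge_comm]; exact hg

lemma mem3 : ∀ a b cc j : ZMod 3, P3 a b cc → j = a ∨ j = b ∨ j = cc := by decide
lemma mem2 : ∀ a b cc t : ZMod 3, P3 a b cc → t ≠ cc → t = a ∨ t = b := by decide
lemma two_of : ∀ j a1 a2 u w : ZMod 3, a1 ≠ j → a2 ≠ j → a1 ≠ a2 → u ≠ j → w ≠ j → u ≠ w →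
    ((a1 = u ∧ a2 = w) ∨ (a1 = w ∧ a2 = u)) := by decide
lemma match3 : ∀ s cc t p q : ZMod 3, P3 s cc t → p ≠ q →
    (pairEq p q s t ∨ pairEq p q s cc ∨ pairEq p q cc t) := by decide
lemma exj : ∀ p q : ZMod 3, p ≠ q → ∃ j, j ≠ p ∧ j ≠ q := by decide
lemma jcases : ∀ j : ZMod 3, j = 0 ∨ j = 1 ∨ j = 2 := by decide
lemma P3_012 : P3 (0 : ZMod 3) 1 2 := by decide

section Core

/-- Pendant in-arcs survive deleting another pendant edge. -/
lemma surv_in (hm : Function.Injective m) (hr : Set.range m = G.neighborSet v)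
    {r : V → V → Prop} {j s : ZMod 3} (hs : s ≠ j) (h : r (m s) v) :
    delEdge r (m j) v (m s) v := by
  refine ⟨h, ?_⟩
  rintro (⟨h1, -⟩ | ⟨h1, -⟩)
  · exact hs (hm h1)
  · exact mv_ne hr s h1

lemma surv_out (hm : Function.Injective m) (hr : Set.range m = G.neighborSet v)
    {r : V → V → Prop} {j t : ZMod 3} (ht : t ≠ j) (h : r v (m t)) :
    delEdge r (m j) v v (m t) := by
  refine ⟨h, ?_⟩
  rintro (⟨h1, -⟩ | ⟨-, h2⟩)
  · exact mv_ne hr j h1.symm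
  · exact ht (hm h2)

/-- Core construction for the case where two of the three chosen copies coincide. -/
lemma memB_core (hm : Function.Injective m) (hr : Set.range m = G.neighborSet v)
    {k : ℕ} (Os : Fin k → Orient G)
    (hstr : ∀ i, IsStrong (Os i).dir)
    (hcov : ∀ u w, G.Adj u w → ∃ i, EdgeDeletable (Os i) u w)
    (A C : Fin k) (hAC : A ≠ C)
    (a b cc s t x y e : ZMod 3)
    (hP : P3 a b cc) (hPsct : P3 s cc t) (hPxye : P3 x y e)
    (hInCs : (Os C).dir (m s) v) (hOutCt : (Os C).dir v (m t))
    (hOx : (Os A).dir v (m x)) (hIy : (Os A).dir (m y) v)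
    (hcA : IsStrong (delEdge (Os A).dir (m a) v))
    (hcB : IsStrong (delEdge (Os A).dir (m b) v))
    (hcC : IsStrong (delEdge (Os C).dir (m cc) v))
    (htri : ∀ p q : ZMod 3, p ≠ q → pairEq p q s t ∨ pairEq p q x y ∨
      (pairEq p q s cc ∧ (Os C).dir (m cc) v) ∨ (pairEq p q cc t ∧ (Os C).dir v (m cc))) :
    ∃ Ps : Fin k → Orient (localCubicMod G v 3 m), (∀ i, IsStrong (Ps i).dir) ∧
      ∀ x y, (localCubicMod G v 3 m).Adj x y → ∃ i, EdgeDeletable (Ps i) x y := by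
  set T : Fin k → ZMod 3 → ZMod 3 → Prop := fun i =>
    if i = C then swt s cc t else if i = A then cyc x y e else cyc 0 1 2 with hT
  have hTC : T C = swt s cc t := by rw [hT]; simp
  have hTA : T A = cyc x y e := by rw [hT]; simp [hAC]
  have hnbO : ∀ i : Fin k, ∀ a b, (Os i).dir a b → ¬ (Os i).dir b a := fun i => (Os i).not_both
  have hnbdel : ∀ (i : Fin k) (u w : V), ∀ a b, delEdge (Os i).dir u w a b →
      ¬ delEdge (Os i).dir u w b a := fun i u w a b h1 h2 => hnbO i a b h1.1 h2.1
  have hcases : ∀ i : Fin k, i = C ∨ i = A ∨ (i ≠ C ∧ i ≠ A) := by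
    intro i
    by_cases h1 : i = C
    · exact Or.inl h1
    · by_cases h2 : i = A
      · exact Or.inr (Or.inl h2)
      · exact Or.inr (Or.inr ⟨h1, h2⟩)
  have hTval : ∀ i : Fin k, T i = swt s cc t ∨ T i = cyc x y e ∨ T i = cyc 0 1 2 := by
    intro i
    rcases hcases i with h1 | h1 | ⟨h1, h2⟩
    · rw [h1]; exact Or.inl hTC
    · rw [h1]; exact Or.inr (Or.inl hTA)
    · right; right; rw [hT]; simp [h1, h2]
  apply memB_assemble hm hr Os hstr hcov T
  · intro i p q
    rcases hTval i with h | h | h <;> rw [h]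
    · exact swt_or _ _ _ hPsct p q
    · exact cyc_or _ _ _ hPxye p q
    · exact cyc_or _ _ _ P3_012 p q
  · intro i p q
    rcases hTval i with h | h | h <;> rw [h]
    · exact swt_nb _ _ _ hPsct p q
    · exact cyc_nb _ _ _ hPxye p q
    · exact cyc_nb _ _ _ P3_012 p q
  · intro i
    rcases hcases i with h1 | h1 | ⟨h1, h2⟩
    · rw [h1, hTC]; exact gd_swt hPsct (hnbO C) hInCs hOutCt
    · rw [h1, hTA]; exact gd_cyc hr hPxye (dir_adj (Os A)) (hstr A)
    · have hti : T i = cyc 0 1 2 := by rw [hT]; simp [h1, h2]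
      rw [hti]; exact gd_cyc hr P3_012 (dir_adj (Os i)) (hstr i)
  · intro j
    rcases mem3 a b cc j hP with hj | hj | hj
    · refine ⟨A, by rw [hj]; exact hcA, ?_⟩
      rw [hTA, hj]
      exact gd_cyc hr hPxye (fun c d h => dir_adj (Os A) c d h.1) hcA
    · refine ⟨A, by rw [hj]; exact hcB, ?_⟩
      rw [hTA, hj]
      exact gd_cyc hr hPxye (fun c d h => dir_adj (Os A) c d h.1) hcB
    · refine ⟨C, by rw [hj]; exact hcC, ?_⟩
      rw [hTC, hj]
      exact gd_swt hPsct (hnbdel C (m cc) v)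
        (surv_in hm hr hPsct.1 hInCs) (surv_out hm hr hPsct.2.2.symm hOutCt)
  · intro p q hpq
    rcases htri p q hpq with h | h | ⟨h, hw⟩ | ⟨h, hw⟩
    · refine ⟨C, ?_⟩
      rw [hTC]
      exact gd_pair h (gd_swt_delST hPsct (hnbO C) hInCs hOutCt)
    · refine ⟨A, ?_⟩
      rw [hTA]
      exact gd_pair h (gd_cyc_del hPxye (hnbO A) hIy hOx)
    · refine ⟨C, ?_⟩
      rw [hTC]
      exact gd_pair h (gd_swt_delSW hPsct (hnbO C) hInCs hOutCt hw)
    · refine ⟨C, ?_⟩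
      rw [hTC]
      exact gd_pair h (gd_swt_delWT hPsct (hnbO C) hInCs hOutCt hw)

end Core

end Assemble


section Final

variable {G : SimpleGraph V} {v : V} {m : ZMod 3 → V}

lemma memB_distinct (hm : Function.Injective m) (hr : Set.range m = G.neighborSet v)
    {k : ℕ} (Os : Fin k → Orient G)
    (hstr : ∀ i, IsStrong (Os i).dir)
    (hcov : ∀ u w, G.Adj u w → ∃ i, EdgeDeletable (Os i) u w)
    (c : ZMod 3 → Fin k)
    (hc : ∀ j, IsStrong (delEdge (Os (c j)).dir (m j) v))
    (s t : ZMod 3 → ZMod 3)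
    (h1 : ∀ j, s j ≠ j) (h2 : ∀ j, t j ≠ j) (h3 : ∀ j, s j ≠ t j)
    (h4 : ∀ j, (Os (c j)).dir (m (s j)) v) (h5 : ∀ j, (Os (c j)).dir v (m (t j)))
    (hd01 : c 0 ≠ c 1) (hd02 : c 0 ≠ c 2) (hd12 : c 1 ≠ c 2) :
    ∃ Ps : Fin k → Orient (localCubicMod G v 3 m), (∀ i, IsStrong (Ps i).dir) ∧
      ∀ x y, (localCubicMod G v 3 m).Adj x y → ∃ i, EdgeDeletable (Ps i) x y := by
  have hP3 : ∀ j, P3 (s j) j (t j) := fun j => ⟨h1 j, h3 j, fun hh => h2 j hh.symm⟩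
  set T : Fin k → ZMod 3 → ZMod 3 → Prop := fun i =>
    if i = c 0 then swt (s 0) 0 (t 0) else if i = c 1 then swt (s 1) 1 (t 1)
    else if i = c 2 then swt (s 2) 2 (t 2) else cyc 0 1 2 with hT
  have hTc : ∀ j, T (c j) = swt (s j) j (t j) := by
    intro j
    rcases jcases j with hj | hj | hj <;> rw [hj] <;> rw [hT]
    · simp
    · simp [hd01.symm]
    · simp [hd02.symm, hd12.symm]
  have hgcase : ∀ i : Fin k, (i = c 0) ∨ (i = c 1) ∨ (i = c 2) ∨
      (i ≠ c 0 ∧ i ≠ c 1 ∧ i ≠ c 2) := by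
    intro i
    by_cases e0 : i = c 0
    · exact Or.inl e0
    by_cases e1 : i = c 1
    · exact Or.inr (Or.inl e1)
    by_cases e2 : i = c 2
    · exact Or.inr (Or.inr (Or.inl e2))
    · exact Or.inr (Or.inr (Or.inr ⟨e0, e1, e2⟩))
  have hTval : ∀ i : Fin k, T i = swt (s 0) 0 (t 0) ∨ T i = swt (s 1) 1 (t 1) ∨
      T i = swt (s 2) 2 (t 2) ∨ T i = cyc 0 1 2 := by
    intro i
    rcases hgcase i with h | h | h | ⟨e0, e1, e2⟩
    · rw [h, hTc 0]; exact Or.inl rfl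
    · rw [h, hTc 1]; exact Or.inr (Or.inl rfl)
    · rw [h, hTc 2]; exact Or.inr (Or.inr (Or.inl rfl))
    · rw [hT]; right; right; right; simp [e0, e1, e2]
  apply memB_assemble hm hr Os hstr hcov T
  · intro i p q
    rcases hTval i with h | h | h | h <;> rw [h]
    · exact swt_or _ _ _ (hP3 0) p q
    · exact swt_or _ _ _ (hP3 1) p q
    · exact swt_or _ _ _ (hP3 2) p q
    · exact cyc_or _ _ _ P3_012 p q
  · intro i p q
    rcases hTval i with h | h | h | h <;> rw [h]
    · exact swt_nb _ _ _ (hP3 0) p q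
    · exact swt_nb _ _ _ (hP3 1) p q
    · exact swt_nb _ _ _ (hP3 2) p q
    · exact cyc_nb _ _ _ P3_012 p q
  · intro i
    rcases hgcase i with h | h | h | ⟨e0, e1, e2⟩
    · rw [h, hTc 0]; exact gd_swt (hP3 0) ((Os (c 0)).not_both) (h4 0) (h5 0)
    · rw [h, hTc 1]; exact gd_swt (hP3 1) ((Os (c 1)).not_both) (h4 1) (h5 1)
    · rw [h, hTc 2]; exact gd_swt (hP3 2) ((Os (c 2)).not_both) (h4 2) (h5 2)
    · have hti : T i = cyc 0 1 2 := by rw [hT]; simp [e0, e1, e2]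
      rw [hti]; exact gd_cyc hr P3_012 (dir_adj (Os i)) (hstr i)
  · intro j
    refine ⟨c j, hc j, ?_⟩
    rw [hTc j]
    exact gd_swt (hP3 j) (fun a b ha hb => (Os (c j)).not_both a b ha.1 hb.1)
      (surv_in hm hr (h1 j) (h4 j)) (surv_out hm hr (h2 j) (h5 j))
  · intro p q hpq
    obtain ⟨j, hjp, hjq⟩ := exj p q hpq
    refine ⟨c j, ?_⟩
    rw [hTc j]
    exact gd_pair (two_of j p q (s j) (t j) (fun h => hjp h.symm) (fun h => hjq h.symm) hpq
        (h1 j) (h2 j) (h3 j))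
      (gd_swt_delST (hP3 j) ((Os (c j)).not_both) (h4 j) (h5 j))

lemma memB_twoeq (hm : Function.Injective m) (hr : Set.range m = G.neighborSet v)
    {k : ℕ} (Os : Fin k → Orient G)
    (hstr : ∀ i, IsStrong (Os i).dir)
    (hcov : ∀ u w, G.Adj u w → ∃ i, EdgeDeletable (Os i) u w)
    (c : ZMod 3 → Fin k)
    (hc : ∀ j, IsStrong (delEdge (Os (c j)).dir (m j) v))
    (hmix : ∀ j, ∃ j1 j2, j1 ≠ j ∧ j2 ≠ j ∧ j1 ≠ j2 ∧
      (Os (c j)).dir (m j1) v ∧ (Os (c j)).dir v (m j2))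
    (a b cc : ZMod 3) (hP : P3 a b cc) (heq : c a = c b) (hne : c a ≠ c cc) :
    ∃ Ps : Fin k → Orient (localCubicMod G v 3 m), (∀ i, IsStrong (Ps i).dir) ∧
      ∀ x y, (localCubicMod G v 3 m).Adj x y → ∃ i, EdgeDeletable (Ps i) x y := by
  obtain ⟨s, t, hs1, ht1, hst, hInCs, hOutCt⟩ := hmix cc
  have hP3C : P3 s cc t := ⟨hs1, hst, fun h => ht1 h.symm⟩
  have hioC : ∀ j, (Os (c cc)).dir (m j) v ∨ (Os (c cc)).dir v (m j) := fun j =>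
    ((Os (c cc)).dir_iff _ _).2 (adj_vm hr j).symm
  have hnbA := (Os (c a)).not_both
  have hcB : IsStrong (delEdge (Os (c a)).dir (m b) v) := by rw [heq]; exact hc b
  obtain ⟨a1, a2, ha1, ha2, ha12, hinA1, houtA2⟩ := hmix a
  obtain ⟨b1, b2, hb1, hb2, hb12, hinB1, houtB2⟩ := hmix b
  rw [← heq] at hinB1 houtB2
  have hporb : ((Os (c a)).dir (m a) v ∧ (Os (c a)).dir (m b) v ∧ (Os (c a)).dir v (m cc)) ∨
      ((Os (c a)).dir v (m a) ∧ (Os (c a)).dir v (m b) ∧ (Os (c a)).dir (m cc) v) := by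
    rcases two_of a a1 a2 b cc ha1 ha2 ha12 hP.1.symm hP.2.1.symm hP.2.2 with ⟨e1, e2⟩ | ⟨e1, e2⟩ <;>
      rcases two_of b b1 b2 a cc hb1 hb2 hb12 hP.1 hP.2.2.symm hP.2.1 with ⟨f1, f2⟩ | ⟨f1, f2⟩ <;>
      rw [e1] at hinA1 <;> rw [e2] at houtA2 <;> rw [f1] at hinB1 <;> rw [f2] at houtB2
    · exact Or.inl ⟨hinB1, hinA1, houtA2⟩
    · exact absurd houtA2 (fun h => hnbA _ _ hinB1 h)
    · exact absurd houtB2 (fun h => hnbA _ _ hinA1 h)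
    · exact Or.inr ⟨houtB2, houtA2, hinA1⟩
  by_cases hincc : (Os (c cc)).dir (m cc) v
  · -- the `A`-copy covers the triangle edge {cc, t}
    have hA : ∃ x y, ((Os (c a)).dir v (m x)) ∧ ((Os (c a)).dir (m y) v) ∧
        ((x = cc ∧ y = t) ∨ (x = t ∧ y = cc)) := by
      rcases hporb with ⟨hIa, hIb, hOcc⟩ | ⟨hOa, hOb, hIcc⟩
      · refine ⟨cc, t, hOcc, ?_, Or.inl ⟨rfl, rfl⟩⟩
        rcases mem2 a b cc t hP ht1 with h | h
        · rw [h]; exact hIa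
        · rw [h]; exact hIb
      · refine ⟨t, cc, ?_, hIcc, Or.inr ⟨rfl, rfl⟩⟩
        rcases mem2 a b cc t hP ht1 with h | h
        · rw [h]; exact hOa
        · rw [h]; exact hOb
    obtain ⟨x, y, hOx, hIy, hxyp⟩ := hA
    have hPxye : P3 x y s := by
      rcases hxyp with ⟨hx, hy⟩ | ⟨hx, hy⟩ <;> rw [hx, hy]
      · exact ⟨fun h => ht1 h.symm, fun h => hs1 h.symm, fun h => hst h.symm⟩
      · exact ⟨ht1, fun h => hst h.symm, fun h => hs1 h.symm⟩
    refine memB_core hm hr Os hstr hcov (c a) (c cc) hne a b cc s t x y s hP hP3C hPxye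
      hInCs hOutCt hOx hIy (hc a) hcB (hc cc) ?_
    intro p q hpq
    rcases match3 s cc t p q hP3C hpq with h | h | h
    · exact Or.inl h
    · exact Or.inr (Or.inr (Or.inl ⟨h, hincc⟩))
    · rcases hxyp with ⟨hx, hy⟩ | ⟨hx, hy⟩
      · exact Or.inr (Or.inl (by rw [hx, hy]; exact h))
      · exact Or.inr (Or.inl (by rw [hx, hy]; exact pairEq_swap h))
  · have houtcc : (Os (c cc)).dir v (m cc) := (hioC cc).resolve_left hincc
    have hA : ∃ x y, ((Os (c a)).dir v (m x)) ∧ ((Os (c a)).dir (m y) v) ∧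
        ((x = cc ∧ y = s) ∨ (x = s ∧ y = cc)) := by
      rcases hporb with ⟨hIa, hIb, hOcc⟩ | ⟨hOa, hOb, hIcc⟩
      · refine ⟨cc, s, hOcc, ?_, Or.inl ⟨rfl, rfl⟩⟩
        rcases mem2 a b cc s hP hs1 with h | h
        · rw [h]; exact hIa
        · rw [h]; exact hIb
      · refine ⟨s, cc, ?_, hIcc, Or.inr ⟨rfl, rfl⟩⟩
        rcases mem2 a b cc s hP hs1 with h | h
        · rw [h]; exact hOa
        · rw [h]; exact hOb
    obtain ⟨x, y, hOx, hIy, hxyp⟩ := hA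
    have hPxye : P3 x y t := by
      rcases hxyp with ⟨hx, hy⟩ | ⟨hx, hy⟩ <;> rw [hx, hy]
      · exact ⟨fun h => hs1 h.symm, fun h => ht1 h.symm, hst⟩
      · exact ⟨hs1, hst, fun h => ht1 h.symm⟩
    refine memB_core hm hr Os hstr hcov (c a) (c cc) hne a b cc s t x y t hP hP3C hPxye
      hInCs hOutCt hOx hIy (hc a) hcB (hc cc) ?_
    intro p q hpq
    rcases match3 s cc t p q hP3C hpq with h | h | h
    · exact Or.inl h
    · rcases hxyp with ⟨hx, hy⟩ | ⟨hx, hy⟩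
      · exact Or.inr (Or.inl (by rw [hx, hy]; exact pairEq_swap h))
      · exact Or.inr (Or.inl (by rw [hx, hy]; exact h))
    · exact Or.inr (Or.inr (Or.inr ⟨h, houtcc⟩))

lemma memB (hm : Function.Injective m) (hr : Set.range m = G.neighborSet v) {k : ℕ}
    (h : ∃ Os : Fin k → Orient G, (∀ i, IsStrong (Os i).dir) ∧
      ∀ u w, G.Adj u w → ∃ i, EdgeDeletable (Os i) u w) :
    ∃ Ps : Fin k → Orient (localCubicMod G v 3 m), (∀ i, IsStrong (Ps i).dir) ∧
      ∀ x y, (localCubicMod G v 3 m).Adj x y → ∃ i, EdgeDeletable (Ps i) x y := by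
  obtain ⟨Os, hstr, hcov⟩ := h
  have hC : ∀ j : ZMod 3, ∃ i, IsStrong (delEdge (Os i).dir (m j) v) := fun j =>
    hcov (m j) v (adj_vm hr j).symm
  choose c hc using hC
  have hmix : ∀ j, ∃ j1 j2, j1 ≠ j ∧ j2 ≠ j ∧ j1 ≠ j2 ∧
      (Os (c j)).dir (m j1) v ∧ (Os (c j)).dir v (m j2) := by
    intro j
    have hadj' : ∀ x y, delEdge (Os (c j)).dir (m j) v x y → G.Adj x y :=
      fun x y h => dir_adj _ _ _ h.1
    obtain ⟨j1, hj1⟩ := exists_into hr hadj' (hc j)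
    obtain ⟨j2, hj2⟩ := exists_outof hr hadj' (hc j)
    refine ⟨j1, j2, ?_, ?_, ?_, hj1.1, hj2.1⟩
    · intro h; exact hj1.2 (Or.inl ⟨by rw [h], rfl⟩)
    · intro h; exact hj2.2 (Or.inr ⟨rfl, by rw [h]⟩)
    · intro h; exact (Os (c j)).not_both _ _ hj1.1 (by rw [h]; exact hj2.1)
  have hnotall : ¬(c 0 = c 1 ∧ c 0 = c 2) := by
    rintro ⟨h01, h02⟩
    obtain ⟨a1, a2, ha1, ha2, ha12, hin0, hout0⟩ := hmix 0
    obtain ⟨b1, b2, hb1, hb2, hb12, hin1, hout1⟩ := hmix 1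
    obtain ⟨d1, d2, hd1, hd2, hd12, hin2, hout2⟩ := hmix 2
    rw [← h01] at hin1 hout1
    rw [← h02] at hin2 hout2
    have N0 : ¬((Os (c 0)).dir (m 0) v ∧ (Os (c 0)).dir v (m 0)) :=
      fun hz => (Os (c 0)).not_both _ _ hz.1 hz.2
    have N1 : ¬((Os (c 0)).dir (m 1) v ∧ (Os (c 0)).dir v (m 1)) :=
      fun hz => (Os (c 0)).not_both _ _ hz.1 hz.2
    have N2 : ¬((Os (c 0)).dir (m 2) v ∧ (Os (c 0)).dir v (m 2)) :=
      fun hz => (Os (c 0)).not_both _ _ hz.1 hz.2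
    rcases two_of 0 a1 a2 1 2 ha1 ha2 ha12 (by decide) (by decide) (by decide) with
        ⟨e1, e2⟩ | ⟨e1, e2⟩ <;>
      rcases two_of 1 b1 b2 0 2 hb1 hb2 hb12 (by decide) (by decide) (by decide) with
        ⟨f1, f2⟩ | ⟨f1, f2⟩ <;>
      rcases two_of 2 d1 d2 0 1 hd1 hd2 hd12 (by decide) (by decide) (by decide) with
        ⟨g1, g2⟩ | ⟨g1, g2⟩ <;>
      rw [e1] at hin0 <;> rw [e2] at hout0 <;> rw [f1] at hin1 <;> rw [f2] at hout1 <;>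
      rw [g1] at hin2 <;> rw [g2] at hout2 <;>
      tauto
  by_cases h01 : c 0 = c 1
  · have h02 : c 0 ≠ c 2 := fun h => hnotall ⟨h01, h⟩
    exact memB_twoeq hm hr Os hstr hcov c hc hmix 0 1 2 (by decide) h01 h02
  · by_cases h02 : c 0 = c 2
    · exact memB_twoeq hm hr Os hstr hcov c hc hmix 0 2 1 (by decide) h02 h01
    · by_cases h12 : c 1 = c 2
      · exact memB_twoeq hm hr Os hstr hcov c hc hmix 1 2 0 (by decide) h12
          (fun h => h01 h.symm)
      · choose s t h1 h2 h3 h4 h5 using hmix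
        exact memB_distinct hm hr Os hstr hcov c hc s t h1 h2 h3 h4 h5 h01 h02 h12

end Final


/-- If `H` is a cubic `3`-edge-connected graph containing a triangle whose contraction
`H/T` is simple and `3`-edge-connected, then `F(H) = F(H/T)`.  Equivalently (as noted in
the paper), `H` is the truncation of `G = H/T` at the contracted vertex `v_T`. -/
theorem stmt_13 [Fintype V] (G : SimpleGraph V) (h3 : ThreeEdgeConn G)
    (hcubic : ∀ w, (G.neighborSet w).ncard = 3) (v : V)
    (m : ZMod 3 → V) (hm : Function.Injective m)
    (hr : Set.range m = G.neighborSet v)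
    (h3v : ThreeEdgeConn (localCubicMod G v 3 m))
    (hcubicH : ∀ w, ((localCubicMod G v 3 m).neighborSet w).ncard = 3) :
    frankNumber (localCubicMod G v 3 m) = frankNumber G := by
  unfold frankNumber
  congr 1
  ext k
  simp only [Set.mem_setOf_eq]
  constructor
  · exact memA hm hr
  · exact memB hm hr

end Frank
end

section
/- Both Blanuša snarks have Frank number exactly 2. -/
namespace Frank

variable {V : Type*}

/-- The first Blanuša snark (18 vertices), given by an explicit edge list. -/
def blanusa1 : SimpleGraph (Fin 18) :=
  SimpleGraph.fromRel (fun a b =>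
    (a, b) ∈ ([(0, 1), (0, 4), (0, 5), (1, 2), (1, 6), (2, 3), (2, 7), (3, 8), (3, 12), (4, 9), (4, 13), (5, 7), (5, 8), (6, 8), (6, 14), (7, 9), (9, 10), (10, 11), (10, 15), (11, 12), (11, 16), (12, 17), (13, 15), (13, 16), (14, 16), (14, 17), (15, 17)] : List (Fin 18 × Fin 18)))

/-- The second Blanuša snark (18 vertices), given by an explicit edge list. -/
def blanusa2 : SimpleGraph (Fin 18) :=
  SimpleGraph.fromRel (fun a b =>
    (a, b) ∈ ([(0, 1), (0, 4), (0, 5), (1, 2), (1, 10), (2, 3), (2, 7), (3, 8), (3, 12), (4, 9), (4, 13), (5, 7), (5, 8), (6, 8), (6, 9), (6, 14), (7, 9), (10, 11), (10, 15), (11, 12), (11, 16), (12, 17), (13, 15), (13, 16), (14, 16), (14, 17), (15, 17)] : List (Fin 18 × Fin 18)))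


def ChainP {α : Type*} (r : α → α → Prop) : α → List α → Prop
  | _, [] => True
  | a, b :: t => r a b ∧ ChainP r b t

def decChainP {α : Type*} (r : α → α → Prop) [DecidableRel r] :
    (a : α) → (l : List α) → Decidable (ChainP r a l)
  | _, [] => .isTrue trivial
  | a, b :: t =>
    letI := decChainP r b t
    inferInstanceAs (Decidable (r a b ∧ ChainP r b t))

instance {α : Type*} (r : α → α → Prop) [DecidableRel r] (a : α) (l : List α) :
    Decidable (ChainP r a l) := decChainP r a l

lemma chainP_head {α : Type*} {r : α → α → Prop} :
    ∀ (t : List α) (a y : α), ChainP r a t → y ∈ a :: t →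
      Relation.ReflTransGen r a y := by
  intro t
  induction t with
  | nil =>
    intro a y _ hy
    rcases List.mem_singleton.mp hy with rfl
    exact Relation.ReflTransGen.refl
  | cons b t' ih =>
    intro a y hch hy
    rcases List.mem_cons.mp hy with rfl | hy'
    · exact Relation.ReflTransGen.refl
    · exact Relation.ReflTransGen.head hch.1 (ih b y hch.2 hy')

lemma chainP_last {α : Type*} {r : α → α → Prop} :
    ∀ (t : List α) (a x : α), ChainP r a t → x ∈ a :: t →
      Relation.ReflTransGen r x ((a :: t).getLast (List.cons_ne_nil a t)) := by
  intro t
  induction t with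
  | nil =>
    intro a x _ hx
    rcases List.mem_singleton.mp hx with rfl
    exact Relation.ReflTransGen.refl
  | cons b t' ih =>
    intro a x hch hx
    have hlast : ((a :: b :: t').getLast (List.cons_ne_nil a (b :: t')))
        = ((b :: t').getLast (List.cons_ne_nil b t')) := by
      simp [List.getLast_cons]
    rw [hlast]
    rcases List.mem_cons.mp hx with rfl | hx'
    · exact Relation.ReflTransGen.head hch.1 (ih b b hch.2 (List.mem_cons_self (a := b) (l := t')))
    · exact ih b x hch.2 hx'

lemma isStrong_of_walk {α : Type*} {r : α → α → Prop} (a : α) (t : List α)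
    (hchain : ChainP r a t)
    (hcyc : (a :: t).getLast (List.cons_ne_nil a t) = a)
    (hall : ∀ v, v ∈ a :: t) : IsStrong r := by
  intro x y
  have hx := chainP_last t a x hchain (hall x)
  have hy := chainP_head t a y hchain (hall y)
  rw [hcyc] at hx
  exact hx.trans hy

lemma edgeDeletable_symm {G : SimpleGraph V} {O : Orient G} {u v : V}
    (h : EdgeDeletable O u v) : EdgeDeletable O v u := by
  intro x y
  exact Relation.ReflTransGen.mono (p := delEdge O.dir v u)
    (fun a b hab => ⟨hab.1, fun hc => hab.2 (Or.symm hc)⟩) x y (h x y)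

lemma oneOut {G : SimpleGraph V} (O : Orient G) {a b c d : V}
    (hN : ∀ x, G.Adj a x ↔ x = b ∨ x = c ∨ x = d)
    (hdel : ∀ u v, G.Adj u v → EdgeDeletable O u v)
    (hb : O.dir a b) (hc : ¬O.dir a c) (hd : ¬O.dir a d) : False := by
  have hab : G.Adj a b := (hN b).mpr (Or.inl rfl)
  have hac : G.Adj a c := (hN c).mpr (Or.inr (Or.inl rfl))
  have h := hdel a b hab a c
  rcases Relation.ReflTransGen.cases_head h with heq | ⟨x, hx, -⟩
  · exact G.ne_of_adj hac heq
  · have hadj : G.Adj a x := (O.dir_iff a x).mp (Or.inl hx.1)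
    rcases (hN x).mp hadj with rfl | rfl | rfl
    · exact hx.2 (Or.inl ⟨rfl, rfl⟩)
    · exact hc hx.1
    · exact hd hx.1

lemma oneIn {G : SimpleGraph V} (O : Orient G) {a b c d : V}
    (hN : ∀ x, G.Adj a x ↔ x = b ∨ x = c ∨ x = d)
    (hdel : ∀ u v, G.Adj u v → EdgeDeletable O u v)
    (hb : O.dir a b) (hc : O.dir a c) (hd : ¬O.dir a d) : False := by
  have hab : G.Adj a b := (hN b).mpr (Or.inl rfl)
  have had : G.Adj a d := (hN d).mpr (Or.inr (Or.inr rfl))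
  have h := hdel a d had b a
  rcases Relation.ReflTransGen.cases_tail h with heq | ⟨y, -, hy⟩
  · exact G.ne_of_adj hab heq
  · have hadj : G.Adj a y := ((O.dir_iff y a).mp (Or.inl hy.1)).symm
    rcases (hN y).mp hadj with rfl | rfl | rfl
    · exact O.not_both a _ hb hy.1
    · exact O.not_both a _ hc hy.1
    · exact hy.2 (Or.inr ⟨rfl, rfl⟩)

lemma no_single {G : SimpleGraph V} (O : Orient G) {a b c d : V}
    (hN : ∀ x, G.Adj a x ↔ x = b ∨ x = c ∨ x = d)
    (hs : IsStrong O.dir)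
    (hdel : ∀ u v, G.Adj u v → EdgeDeletable O u v) : False := by
  by_cases hb : O.dir a b <;> by_cases hc : O.dir a c <;> by_cases hd : O.dir a d
  · rcases Relation.ReflTransGen.cases_tail (hs b a) with heq | ⟨y, -, hy⟩
    · exact G.ne_of_adj ((hN b).mpr (Or.inl rfl)) heq
    · have hadj : G.Adj a y := ((O.dir_iff y a).mp (Or.inl hy)).symm
      rcases (hN y).mp hadj with rfl | rfl | rfl
      · exact O.not_both a _ hb hy
      · exact O.not_both a _ hc hy
      · exact O.not_both a _ hd hy
  · exact oneIn O hN hdel hb hc hd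
  · exact oneIn O (fun x => (hN x).trans (by tauto)) hdel hb hd hc
  · exact oneOut O hN hdel hb hc hd
  · exact oneIn O (fun x => (hN x).trans (by tauto)) hdel hc hd hb
  · exact oneOut O (fun x => (hN x).trans (by tauto)) hdel hc hb hd
  · exact oneOut O (fun x => (hN x).trans (by tauto)) hdel hd hb hc
  · rcases Relation.ReflTransGen.cases_head (hs a b) with heq | ⟨x, hx, -⟩
    · exact G.ne_of_adj ((hN b).mpr (Or.inl rfl)) heq
    · rcases (hN x).mp ((O.dir_iff a x).mp (Or.inl hx)) with rfl | rfl | rfl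
      · exact hb hx
      · exact hc hx
      · exact hd hx

def A1a : List (Fin 18 × Fin 18) := [(1, 0), (4, 0), (0, 5), (2, 1), (1, 6), (3, 2), (7, 2), (8, 3), (12, 3), (4, 9), (13, 4), (7, 5), (5, 8), (8, 6), (6, 14), (9, 7), (10, 9), (10, 11), (15, 10), (11, 12), (16, 11), (12, 17), (15, 13), (16, 13), (14, 16), (14, 17), (17, 15)]
def A1b : List (Fin 18 × Fin 18) := [(0, 1), (4, 0), (5, 0), (1, 2), (1, 6), (3, 2), (2, 7), (8, 3), (3, 12), (9, 4), (4, 13), (7, 5), (5, 8), (6, 8), (14, 6), (9, 7), (10, 9), (11, 10), (10, 15), (12, 11), (16, 11), (12, 17), (15, 13), (13, 16), (14, 16), (17, 14), (17, 15)]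
def W1a_t : List (Fin 18) := [5, 8, 3, 2, 1, 6, 14, 16, 11, 12, 17, 15, 10, 9, 7, 2, 1, 6, 14, 16, 13, 4, 0]
def W1b_t : List (Fin 18) := [1, 2, 7, 5, 8, 3, 12, 11, 10, 9, 4, 13, 16, 11, 10, 15, 13, 16, 11, 10, 9, 4, 0, 1, 6, 8, 3, 12, 17, 14, 16, 11, 10, 9, 4, 0]
def W1_0_1_t : List (Fin 18) := [5, 8, 3, 2, 1, 6, 14, 16, 11, 12, 17, 15, 10, 9, 7, 2, 1, 6, 14, 16, 13, 4, 0]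
def W1_0_4_t : List (Fin 18) := [5, 8, 3, 2, 1, 6, 14, 16, 11, 12, 17, 15, 10, 9, 7, 2, 1, 6, 14, 16, 13, 4, 9, 7, 2, 1, 0]
def W1_0_5_t : List (Fin 18) := [1, 2, 7, 5, 8, 3, 12, 11, 10, 9, 4, 13, 16, 11, 10, 15, 13, 16, 11, 10, 9, 4, 0, 1, 6, 8, 3, 12, 17, 14, 16, 11, 10, 9, 4, 0]
def W1_1_2_t : List (Fin 18) := [1, 6, 8, 3, 2, 7, 5, 8, 3, 12, 11, 10, 9, 4, 13, 16, 11, 10, 15, 13, 16, 11, 10, 9, 7, 5, 8, 3, 12, 17, 14, 16, 11, 10, 9, 4, 0]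
def W1_1_6_t : List (Fin 18) := [5, 8, 3, 2, 1, 0, 5, 8, 6, 14, 16, 11, 12, 17, 15, 10, 9, 7, 5, 8, 6, 14, 16, 13, 4, 0]
def W1_2_3_t : List (Fin 18) := [1, 2, 7, 5, 8, 3, 12, 11, 10, 9, 4, 13, 16, 11, 10, 15, 13, 16, 11, 10, 9, 4, 0, 1, 6, 8, 3, 12, 17, 14, 16, 11, 10, 9, 4, 0]
def W1_2_7_t : List (Fin 18) := [5, 8, 3, 2, 1, 6, 14, 16, 11, 12, 17, 15, 10, 9, 7, 5, 8, 6, 14, 16, 13, 4, 0]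
def W1_3_8_t : List (Fin 18) := [5, 8, 6, 14, 16, 11, 12, 3, 2, 1, 6, 14, 17, 15, 10, 9, 7, 2, 1, 6, 14, 16, 13, 4, 0]
def W1_3_12_t : List (Fin 18) := [5, 8, 3, 2, 1, 6, 14, 16, 11, 12, 17, 15, 10, 9, 7, 2, 1, 6, 14, 16, 13, 4, 0]
def W1_4_9_t : List (Fin 18) := [5, 8, 3, 2, 1, 6, 14, 16, 11, 12, 17, 15, 10, 9, 7, 2, 1, 6, 14, 16, 13, 4, 0]
def W1_4_13_t : List (Fin 18) := [1, 2, 7, 5, 8, 3, 12, 11, 10, 9, 4, 0, 1, 6, 8, 3, 12, 17, 14, 16, 11, 10, 15, 13, 16, 11, 10, 9, 4, 0]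
def W1_5_7_t : List (Fin 18) := [5, 8, 3, 2, 1, 6, 14, 16, 11, 12, 17, 15, 10, 9, 7, 2, 1, 6, 14, 16, 13, 4, 0]
def W1_5_8_t : List (Fin 18) := [1, 2, 7, 5, 0, 1, 6, 8, 3, 12, 11, 10, 9, 4, 13, 16, 11, 10, 15, 13, 16, 11, 10, 9, 4, 0, 1, 6, 8, 3, 12, 17, 14, 16, 11, 10, 9, 4, 0]
def W1_6_8_t : List (Fin 18) := [5, 8, 3, 2, 1, 6, 14, 16, 11, 12, 17, 15, 10, 9, 7, 2, 1, 6, 14, 16, 13, 4, 0]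
def W1_6_14_t : List (Fin 18) := [1, 2, 7, 5, 8, 3, 12, 11, 10, 9, 4, 13, 16, 11, 10, 15, 13, 16, 11, 10, 9, 4, 0, 1, 6, 8, 3, 12, 17, 14, 16, 11, 10, 9, 4, 0]
def W1_7_9_t : List (Fin 18) := [1, 2, 7, 5, 8, 3, 12, 11, 10, 9, 4, 13, 16, 11, 10, 15, 13, 16, 11, 10, 9, 4, 0, 1, 6, 8, 3, 12, 17, 14, 16, 11, 10, 9, 4, 0]
def W1_9_10_t : List (Fin 18) := [5, 8, 3, 2, 1, 6, 14, 16, 11, 12, 17, 15, 10, 11, 12, 17, 15, 13, 4, 9, 7, 2, 1, 0]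
def W1_10_11_t : List (Fin 18) := [5, 8, 3, 2, 1, 6, 14, 16, 11, 12, 17, 15, 10, 9, 7, 2, 1, 6, 14, 16, 13, 4, 0]
def W1_10_15_t : List (Fin 18) := [1, 2, 7, 5, 8, 3, 12, 11, 10, 9, 4, 13, 16, 11, 10, 9, 4, 0, 1, 6, 8, 3, 12, 17, 14, 6, 8, 3, 12, 17, 15, 13, 16, 11, 10, 9, 4, 0]
def W1_11_12_t : List (Fin 18) := [1, 2, 7, 5, 8, 3, 12, 17, 14, 6, 8, 3, 12, 17, 15, 13, 16, 11, 10, 9, 4, 0]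
def W1_11_16_t : List (Fin 18) := [5, 8, 3, 2, 1, 6, 14, 16, 13, 4, 9, 7, 2, 1, 6, 14, 17, 15, 10, 11, 12, 3, 2, 1, 0]
def W1_12_17_t : List (Fin 18) := [5, 8, 3, 2, 1, 6, 14, 16, 11, 12, 3, 2, 1, 6, 14, 17, 15, 10, 9, 7, 2, 1, 6, 14, 16, 13, 4, 0]
def W1_13_15_t : List (Fin 18) := [5, 8, 3, 2, 1, 6, 14, 16, 11, 12, 17, 15, 10, 9, 7, 2, 1, 6, 14, 16, 13, 4, 0]
def W1_13_16_t : List (Fin 18) := [5, 8, 3, 2, 1, 6, 14, 16, 11, 12, 17, 15, 10, 9, 7, 2, 1, 6, 14, 17, 15, 13, 4, 0]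
def W1_14_16_t : List (Fin 18) := [1, 2, 7, 5, 8, 3, 12, 11, 10, 9, 4, 13, 16, 11, 10, 15, 13, 16, 11, 10, 9, 4, 0, 1, 6, 8, 3, 12, 17, 14, 6, 8, 3, 2, 7, 5, 0]
def W1_14_17_t : List (Fin 18) := [5, 8, 3, 2, 1, 6, 14, 16, 11, 12, 17, 15, 10, 9, 7, 2, 1, 6, 14, 16, 13, 4, 0]
def W1_15_17_t : List (Fin 18) := [1, 2, 7, 5, 8, 3, 12, 11, 10, 9, 4, 13, 16, 11, 10, 15, 13, 16, 11, 10, 9, 4, 0, 1, 6, 8, 3, 12, 17, 14, 16, 11, 10, 9, 4, 0]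
def A2a : List (Fin 18 × Fin 18) := [(0, 1), (4, 0), (0, 5), (1, 2), (10, 1), (2, 3), (2, 7), (8, 3), (3, 12), (9, 4), (13, 4), (7, 5), (5, 8), (8, 6), (6, 9), (14, 6), (9, 7), (11, 10), (10, 15), (12, 11), (11, 16), (12, 17), (13, 15), (16, 13), (14, 16), (17, 14), (15, 17)]
def A2b : List (Fin 18 × Fin 18) := [(0, 1), (0, 4), (5, 0), (1, 2), (1, 10), (2, 3), (7, 2), (3, 8), (3, 12), (4, 9), (13, 4), (7, 5), (8, 5), (8, 6), (9, 6), (6, 14), (9, 7), (11, 10), (10, 15), (11, 12), (16, 11), (12, 17), (15, 13), (13, 16), (14, 16), (17, 14), (17, 15)]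
def W2a_t : List (Fin 18) := [1, 2, 3, 12, 11, 10, 15, 17, 14, 6, 9, 4, 0, 5, 8, 6, 9, 7, 5, 8, 3, 12, 11, 16, 13, 4, 0]
def W2b_t : List (Fin 18) := [1, 2, 3, 8, 5, 0, 4, 9, 6, 14, 16, 11, 10, 15, 13, 4, 9, 7, 2, 3, 12, 17, 15, 13, 4, 9, 7, 5, 0]
def W2_0_1_t : List (Fin 18) := [5, 8, 3, 12, 11, 10, 1, 2, 7, 5, 8, 6, 9, 4, 0, 5, 8, 3, 12, 17, 14, 16, 13, 15, 17, 14, 6, 9, 4, 0]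
def W2_0_4_t : List (Fin 18) := [1, 2, 3, 8, 5, 0, 1, 10, 15, 13, 4, 9, 6, 14, 16, 11, 12, 17, 15, 13, 4, 9, 7, 5, 0]
def W2_0_5_t : List (Fin 18) := [1, 2, 3, 12, 11, 10, 15, 17, 14, 6, 9, 4, 0, 1, 2, 7, 5, 8, 3, 12, 11, 16, 13, 4, 0]
def W2_1_2_t : List (Fin 18) := [1, 10, 15, 13, 4, 9, 6, 14, 16, 11, 12, 17, 15, 13, 4, 9, 7, 2, 3, 8, 5, 0]
def W2_1_10_t : List (Fin 18) := [1, 2, 3, 12, 11, 10, 15, 17, 14, 6, 9, 4, 0, 5, 8, 6, 9, 7, 5, 8, 3, 12, 11, 16, 13, 4, 0]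
def W2_2_3_t : List (Fin 18) := [1, 2, 7, 5, 8, 3, 12, 11, 10, 15, 17, 14, 6, 9, 4, 0, 5, 8, 3, 12, 11, 16, 13, 4, 0]
def W2_2_7_t : List (Fin 18) := [1, 2, 3, 12, 11, 10, 15, 17, 14, 6, 9, 4, 0, 5, 8, 6, 9, 7, 5, 8, 3, 12, 11, 16, 13, 4, 0]
def W2_3_8_t : List (Fin 18) := [1, 2, 3, 12, 11, 10, 15, 17, 14, 6, 9, 4, 0, 5, 8, 6, 9, 7, 5, 8, 6, 9, 4, 0, 1, 2, 3, 12, 11, 16, 13, 4, 0]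
def W2_3_12_t : List (Fin 18) := [1, 2, 3, 8, 5, 0, 4, 9, 6, 14, 16, 11, 10, 15, 13, 4, 9, 7, 2, 3, 8, 6, 14, 16, 11, 12, 17, 15, 13, 4, 9, 7, 5, 0]
def W2_4_9_t : List (Fin 18) := [1, 2, 3, 12, 11, 10, 15, 17, 14, 6, 9, 7, 5, 8, 3, 12, 11, 16, 13, 4, 0]
def W2_4_13_t : List (Fin 18) := [1, 2, 3, 12, 11, 10, 15, 17, 14, 6, 9, 4, 0, 5, 8, 6, 9, 7, 5, 8, 3, 12, 11, 16, 13, 15, 17, 14, 6, 9, 4, 0]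
def W2_5_7_t : List (Fin 18) := [1, 2, 3, 8, 5, 0, 4, 9, 6, 14, 16, 11, 10, 15, 13, 4, 9, 7, 2, 3, 12, 17, 15, 13, 4, 9, 7, 2, 3, 8, 5, 0]
def W2_5_8_t : List (Fin 18) := [1, 2, 3, 8, 6, 14, 16, 11, 10, 15, 13, 4, 9, 7, 5, 0, 1, 2, 3, 12, 17, 15, 13, 4, 9, 7, 5, 0]
def W2_6_8_t : List (Fin 18) := [1, 2, 3, 12, 11, 10, 15, 17, 14, 6, 9, 4, 0, 5, 8, 3, 12, 11, 16, 13, 4, 0, 1, 2, 7, 5, 8, 3, 12, 11, 16, 13, 4, 0]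
def W2_6_9_t : List (Fin 18) := [1, 2, 3, 8, 5, 0, 4, 9, 7, 2, 3, 12, 17, 14, 16, 11, 10, 15, 13, 4, 9, 7, 2, 3, 8, 6, 14, 16, 11, 10, 15, 13, 4, 9, 7, 5, 0]
def W2_6_14_t : List (Fin 18) := [1, 2, 3, 12, 11, 10, 15, 17, 14, 16, 13, 4, 0, 5, 8, 6, 9, 7, 5, 8, 6, 9, 4, 0]
def W2_7_9_t : List (Fin 18) := [1, 2, 3, 12, 11, 10, 15, 17, 14, 6, 9, 4, 0, 5, 8, 3, 12, 11, 16, 13, 4, 0, 1, 2, 7, 5, 8, 6, 9, 4, 0]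
def W2_10_11_t : List (Fin 18) := [1, 2, 3, 8, 5, 0, 4, 9, 6, 14, 16, 11, 12, 17, 15, 13, 4, 9, 7, 5, 0, 1, 10, 15, 13, 4, 9, 7, 5, 0]
def W2_10_15_t : List (Fin 18) := [1, 2, 3, 12, 11, 10, 1, 2, 7, 5, 8, 6, 9, 4, 0, 1, 2, 3, 12, 17, 14, 16, 13, 15, 17, 14, 6, 9, 4, 0]
def W2_11_12_t : List (Fin 18) := [1, 2, 3, 8, 5, 0, 4, 9, 6, 14, 16, 11, 10, 15, 13, 4, 9, 7, 2, 3, 12, 17, 15, 13, 4, 9, 7, 5, 0]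
def W2_11_16_t : List (Fin 18) := [1, 2, 3, 12, 11, 10, 15, 17, 14, 6, 9, 4, 0, 5, 8, 6, 9, 7, 5, 8, 3, 12, 17, 14, 16, 13, 4, 0]
def W2_12_17_t : List (Fin 18) := [1, 2, 3, 12, 11, 10, 15, 17, 14, 6, 9, 4, 0, 5, 8, 6, 9, 7, 5, 8, 3, 12, 11, 16, 13, 4, 0]
def W2_13_15_t : List (Fin 18) := [1, 2, 3, 12, 11, 10, 15, 17, 14, 6, 9, 4, 0, 5, 8, 6, 9, 7, 5, 8, 3, 12, 11, 16, 13, 4, 0]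
def W2_13_16_t : List (Fin 18) := [1, 2, 3, 8, 5, 0, 4, 9, 6, 14, 16, 11, 10, 15, 13, 4, 9, 7, 2, 3, 12, 17, 15, 13, 4, 9, 7, 5, 0]
def W2_14_16_t : List (Fin 18) := [1, 2, 3, 12, 11, 10, 15, 17, 14, 6, 9, 4, 0, 5, 8, 6, 9, 7, 5, 8, 3, 12, 11, 16, 13, 4, 0]
def W2_14_17_t : List (Fin 18) := [1, 2, 3, 8, 5, 0, 4, 9, 6, 14, 16, 11, 10, 15, 13, 4, 9, 7, 2, 3, 12, 17, 15, 13, 4, 9, 7, 5, 0]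
def W2_15_17_t : List (Fin 18) := [1, 2, 3, 8, 5, 0, 4, 9, 6, 14, 16, 11, 10, 15, 13, 4, 9, 7, 2, 3, 12, 17, 14, 16, 11, 10, 15, 13, 4, 9, 7, 5, 0]


def E1def : List (Fin 18 × Fin 18) := [(0, 1), (0, 4), (0, 5), (1, 2), (1, 6), (2, 3), (2, 7), (3, 8), (3, 12), (4, 9), (4, 13), (5, 7), (5, 8), (6, 8), (6, 14), (7, 9), (9, 10), (10, 11), (10, 15), (11, 12), (11, 16), (12, 17), (13, 15), (13, 16), (14, 16), (14, 17), (15, 17)]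

lemma adj1 (u v : Fin 18) :
    blanusa1.Adj u v ↔ u ≠ v ∧ ((u, v) ∈ E1def ∨ (v, u) ∈ E1def) := Iff.rfl

def O1A : Orient blanusa1 where
  dir u v := (u, v) ∈ A1a
  dir_iff := by
    intro u v
    rw [adj1]
    revert u v
    decide
  not_both := by decide

lemma s1a : IsStrong O1A.dir :=
  isStrong_of_walk (r := fun u v : Fin 18 => (u, v) ∈ A1a)
    0 W1a_t (by decide) (by decide) (by decide)

def O1B : Orient blanusa1 where
  dir u v := (u, v) ∈ A1b
  dir_iff := by
    intro u v
    rw [adj1]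
    revert u v
    decide
  not_both := by decide

lemma s1b : IsStrong O1B.dir :=
  isStrong_of_walk (r := fun u v : Fin 18 => (u, v) ∈ A1b)
    0 W1b_t (by decide) (by decide) (by decide)

lemma d1_0_1 : EdgeDeletable O1A (0 : Fin 18) 1 :=
  isStrong_of_walk
    (r := fun x y : Fin 18 => (x, y) ∈ A1a ∧
      ¬((x = 0 ∧ y = 1) ∨ (x = 1 ∧ y = 0)))
    0 W1_0_1_t (by decide) (by decide) (by decide)

lemma d1_0_4 : EdgeDeletable O1A (0 : Fin 18) 4 :=
  isStrong_of_walk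
    (r := fun x y : Fin 18 => (x, y) ∈ A1a ∧
      ¬((x = 0 ∧ y = 4) ∨ (x = 4 ∧ y = 0)))
    0 W1_0_4_t (by decide) (by decide) (by decide)

lemma d1_0_5 : EdgeDeletable O1B (0 : Fin 18) 5 :=
  isStrong_of_walk
    (r := fun x y : Fin 18 => (x, y) ∈ A1b ∧
      ¬((x = 0 ∧ y = 5) ∨ (x = 5 ∧ y = 0)))
    0 W1_0_5_t (by decide) (by decide) (by decide)

lemma d1_1_2 : EdgeDeletable O1B (1 : Fin 18) 2 :=
  isStrong_of_walk
    (r := fun x y : Fin 18 => (x, y) ∈ A1b ∧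
      ¬((x = 1 ∧ y = 2) ∨ (x = 2 ∧ y = 1)))
    0 W1_1_2_t (by decide) (by decide) (by decide)

lemma d1_1_6 : EdgeDeletable O1A (1 : Fin 18) 6 :=
  isStrong_of_walk
    (r := fun x y : Fin 18 => (x, y) ∈ A1a ∧
      ¬((x = 1 ∧ y = 6) ∨ (x = 6 ∧ y = 1)))
    0 W1_1_6_t (by decide) (by decide) (by decide)

lemma d1_2_3 : EdgeDeletable O1B (2 : Fin 18) 3 :=
  isStrong_of_walk
    (r := fun x y : Fin 18 => (x, y) ∈ A1b ∧
      ¬((x = 2 ∧ y = 3) ∨ (x = 3 ∧ y = 2)))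
    0 W1_2_3_t (by decide) (by decide) (by decide)

lemma d1_2_7 : EdgeDeletable O1A (2 : Fin 18) 7 :=
  isStrong_of_walk
    (r := fun x y : Fin 18 => (x, y) ∈ A1a ∧
      ¬((x = 2 ∧ y = 7) ∨ (x = 7 ∧ y = 2)))
    0 W1_2_7_t (by decide) (by decide) (by decide)

lemma d1_3_8 : EdgeDeletable O1A (3 : Fin 18) 8 :=
  isStrong_of_walk
    (r := fun x y : Fin 18 => (x, y) ∈ A1a ∧
      ¬((x = 3 ∧ y = 8) ∨ (x = 8 ∧ y = 3)))
    0 W1_3_8_t (by decide) (by decide) (by decide)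

lemma d1_3_12 : EdgeDeletable O1A (3 : Fin 18) 12 :=
  isStrong_of_walk
    (r := fun x y : Fin 18 => (x, y) ∈ A1a ∧
      ¬((x = 3 ∧ y = 12) ∨ (x = 12 ∧ y = 3)))
    0 W1_3_12_t (by decide) (by decide) (by decide)

lemma d1_4_9 : EdgeDeletable O1A (4 : Fin 18) 9 :=
  isStrong_of_walk
    (r := fun x y : Fin 18 => (x, y) ∈ A1a ∧
      ¬((x = 4 ∧ y = 9) ∨ (x = 9 ∧ y = 4)))
    0 W1_4_9_t (by decide) (by decide) (by decide)

lemma d1_4_13 : EdgeDeletable O1B (4 : Fin 18) 13 :=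
  isStrong_of_walk
    (r := fun x y : Fin 18 => (x, y) ∈ A1b ∧
      ¬((x = 4 ∧ y = 13) ∨ (x = 13 ∧ y = 4)))
    0 W1_4_13_t (by decide) (by decide) (by decide)

lemma d1_5_7 : EdgeDeletable O1A (5 : Fin 18) 7 :=
  isStrong_of_walk
    (r := fun x y : Fin 18 => (x, y) ∈ A1a ∧
      ¬((x = 5 ∧ y = 7) ∨ (x = 7 ∧ y = 5)))
    0 W1_5_7_t (by decide) (by decide) (by decide)

lemma d1_5_8 : EdgeDeletable O1B (5 : Fin 18) 8 :=
  isStrong_of_walk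
    (r := fun x y : Fin 18 => (x, y) ∈ A1b ∧
      ¬((x = 5 ∧ y = 8) ∨ (x = 8 ∧ y = 5)))
    0 W1_5_8_t (by decide) (by decide) (by decide)

lemma d1_6_8 : EdgeDeletable O1A (6 : Fin 18) 8 :=
  isStrong_of_walk
    (r := fun x y : Fin 18 => (x, y) ∈ A1a ∧
      ¬((x = 6 ∧ y = 8) ∨ (x = 8 ∧ y = 6)))
    0 W1_6_8_t (by decide) (by decide) (by decide)

lemma d1_6_14 : EdgeDeletable O1B (6 : Fin 18) 14 :=
  isStrong_of_walk
    (r := fun x y : Fin 18 => (x, y) ∈ A1b ∧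
      ¬((x = 6 ∧ y = 14) ∨ (x = 14 ∧ y = 6)))
    0 W1_6_14_t (by decide) (by decide) (by decide)

lemma d1_7_9 : EdgeDeletable O1B (7 : Fin 18) 9 :=
  isStrong_of_walk
    (r := fun x y : Fin 18 => (x, y) ∈ A1b ∧
      ¬((x = 7 ∧ y = 9) ∨ (x = 9 ∧ y = 7)))
    0 W1_7_9_t (by decide) (by decide) (by decide)

lemma d1_9_10 : EdgeDeletable O1A (9 : Fin 18) 10 :=
  isStrong_of_walk
    (r := fun x y : Fin 18 => (x, y) ∈ A1a ∧
      ¬((x = 9 ∧ y = 10) ∨ (x = 10 ∧ y = 9)))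
    0 W1_9_10_t (by decide) (by decide) (by decide)

lemma d1_10_11 : EdgeDeletable O1A (10 : Fin 18) 11 :=
  isStrong_of_walk
    (r := fun x y : Fin 18 => (x, y) ∈ A1a ∧
      ¬((x = 10 ∧ y = 11) ∨ (x = 11 ∧ y = 10)))
    0 W1_10_11_t (by decide) (by decide) (by decide)

lemma d1_10_15 : EdgeDeletable O1B (10 : Fin 18) 15 :=
  isStrong_of_walk
    (r := fun x y : Fin 18 => (x, y) ∈ A1b ∧
      ¬((x = 10 ∧ y = 15) ∨ (x = 15 ∧ y = 10)))
    0 W1_10_15_t (by decide) (by decide) (by decide)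

lemma d1_11_12 : EdgeDeletable O1B (11 : Fin 18) 12 :=
  isStrong_of_walk
    (r := fun x y : Fin 18 => (x, y) ∈ A1b ∧
      ¬((x = 11 ∧ y = 12) ∨ (x = 12 ∧ y = 11)))
    0 W1_11_12_t (by decide) (by decide) (by decide)

lemma d1_11_16 : EdgeDeletable O1A (11 : Fin 18) 16 :=
  isStrong_of_walk
    (r := fun x y : Fin 18 => (x, y) ∈ A1a ∧
      ¬((x = 11 ∧ y = 16) ∨ (x = 16 ∧ y = 11)))
    0 W1_11_16_t (by decide) (by decide) (by decide)

lemma d1_12_17 : EdgeDeletable O1A (12 : Fin 18) 17 :=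
  isStrong_of_walk
    (r := fun x y : Fin 18 => (x, y) ∈ A1a ∧
      ¬((x = 12 ∧ y = 17) ∨ (x = 17 ∧ y = 12)))
    0 W1_12_17_t (by decide) (by decide) (by decide)

lemma d1_13_15 : EdgeDeletable O1A (13 : Fin 18) 15 :=
  isStrong_of_walk
    (r := fun x y : Fin 18 => (x, y) ∈ A1a ∧
      ¬((x = 13 ∧ y = 15) ∨ (x = 15 ∧ y = 13)))
    0 W1_13_15_t (by decide) (by decide) (by decide)

lemma d1_13_16 : EdgeDeletable O1A (13 : Fin 18) 16 :=
  isStrong_of_walk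
    (r := fun x y : Fin 18 => (x, y) ∈ A1a ∧
      ¬((x = 13 ∧ y = 16) ∨ (x = 16 ∧ y = 13)))
    0 W1_13_16_t (by decide) (by decide) (by decide)

lemma d1_14_16 : EdgeDeletable O1B (14 : Fin 18) 16 :=
  isStrong_of_walk
    (r := fun x y : Fin 18 => (x, y) ∈ A1b ∧
      ¬((x = 14 ∧ y = 16) ∨ (x = 16 ∧ y = 14)))
    0 W1_14_16_t (by decide) (by decide) (by decide)

lemma d1_14_17 : EdgeDeletable O1A (14 : Fin 18) 17 :=
  isStrong_of_walk
    (r := fun x y : Fin 18 => (x, y) ∈ A1a ∧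
      ¬((x = 14 ∧ y = 17) ∨ (x = 17 ∧ y = 14)))
    0 W1_14_17_t (by decide) (by decide) (by decide)

lemma d1_15_17 : EdgeDeletable O1B (15 : Fin 18) 17 :=
  isStrong_of_walk
    (r := fun x y : Fin 18 => (x, y) ∈ A1b ∧
      ¬((x = 15 ∧ y = 17) ∨ (x = 17 ∧ y = 15)))
    0 W1_15_17_t (by decide) (by decide) (by decide)

def Os1 : Fin 2 → Orient blanusa1 := ![O1A, O1B]

lemma cov1 : ∀ u v, blanusa1.Adj u v → ∃ i : Fin 2, EdgeDeletable (Os1 i) u v := by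
  have key : ∀ p ∈ E1def, ∃ i : Fin 2, EdgeDeletable (Os1 i) p.1 p.2 := by
    intro p hp
    fin_cases hp
    · exact ⟨0, d1_0_1⟩
    · exact ⟨0, d1_0_4⟩
    · exact ⟨1, d1_0_5⟩
    · exact ⟨1, d1_1_2⟩
    · exact ⟨0, d1_1_6⟩
    · exact ⟨1, d1_2_3⟩
    · exact ⟨0, d1_2_7⟩
    · exact ⟨0, d1_3_8⟩
    · exact ⟨0, d1_3_12⟩
    · exact ⟨0, d1_4_9⟩
    · exact ⟨1, d1_4_13⟩
    · exact ⟨0, d1_5_7⟩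
    · exact ⟨1, d1_5_8⟩
    · exact ⟨0, d1_6_8⟩
    · exact ⟨1, d1_6_14⟩
    · exact ⟨1, d1_7_9⟩
    · exact ⟨0, d1_9_10⟩
    · exact ⟨0, d1_10_11⟩
    · exact ⟨1, d1_10_15⟩
    · exact ⟨1, d1_11_12⟩
    · exact ⟨0, d1_11_16⟩
    · exact ⟨0, d1_12_17⟩
    · exact ⟨0, d1_13_15⟩
    · exact ⟨0, d1_13_16⟩
    · exact ⟨1, d1_14_16⟩
    · exact ⟨0, d1_14_17⟩
    · exact ⟨1, d1_15_17⟩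
  intro u v h
  rcases (adj1 u v).mp h with ⟨hne, h' | h'⟩
  · exact key (u, v) h'
  · obtain ⟨i, hi⟩ := key (v, u) h'
    exact ⟨i, edgeDeletable_symm hi⟩

lemma mem1 : 2 ∈ {k | ∃ Os : Fin k → Orient blanusa1, (∀ i, IsStrong (Os i).dir) ∧
    ∀ u v, blanusa1.Adj u v → ∃ i, EdgeDeletable (Os i) u v} := by
  refine ⟨Os1, ?_, cov1⟩
  intro i
  fin_cases i
  · exact s1a
  · exact s1b

lemma hN1 : ∀ x : Fin 18, blanusa1.Adj 0 x ↔ x = 1 ∨ x = 4 ∨ x = 5 := by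
  intro x
  rw [adj1]
  revert x
  decide

lemma frank1 : frankNumber blanusa1 = 2 := by
  apply le_antisymm (Nat.sInf_le mem1)
  apply le_csInf ⟨2, mem1⟩
  rintro k ⟨Os, hs, hcov⟩
  by_contra hlt
  push_neg at hlt
  interval_cases k
  · obtain ⟨i, -⟩ := hcov 0 1 ((adj1 0 1).mpr (by decide))
    exact i.elim0
  · exact no_single (Os 0) hN1 (hs 0)
      (fun u v h => by
        obtain ⟨i, hi⟩ := hcov u v h
        rwa [Subsingleton.elim i 0] at hi)

def E2def : List (Fin 18 × Fin 18) := [(0, 1), (0, 4), (0, 5), (1, 2), (1, 10), (2, 3), (2, 7), (3, 8), (3, 12), (4, 9), (4, 13), (5, 7), (5, 8), (6, 8), (6, 9), (6, 14), (7, 9), (10, 11), (10, 15), (11, 12), (11, 16), (12, 17), (13, 15), (13, 16), (14, 16), (14, 17), (15, 17)]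

lemma adj2 (u v : Fin 18) :
    blanusa2.Adj u v ↔ u ≠ v ∧ ((u, v) ∈ E2def ∨ (v, u) ∈ E2def) := Iff.rfl

def O2A : Orient blanusa2 where
  dir u v := (u, v) ∈ A2a
  dir_iff := by
    intro u v
    rw [adj2]
    revert u v
    decide
  not_both := by decide

lemma s2a : IsStrong O2A.dir :=
  isStrong_of_walk (r := fun u v : Fin 18 => (u, v) ∈ A2a)
    0 W2a_t (by decide) (by decide) (by decide)

def O2B : Orient blanusa2 where
  dir u v := (u, v) ∈ A2b
  dir_iff := by
    intro u v
    rw [adj2]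
    revert u v
    decide
  not_both := by decide

lemma s2b : IsStrong O2B.dir :=
  isStrong_of_walk (r := fun u v : Fin 18 => (u, v) ∈ A2b)
    0 W2b_t (by decide) (by decide) (by decide)

lemma d2_0_1 : EdgeDeletable O2A (0 : Fin 18) 1 :=
  isStrong_of_walk
    (r := fun x y : Fin 18 => (x, y) ∈ A2a ∧
      ¬((x = 0 ∧ y = 1) ∨ (x = 1 ∧ y = 0)))
    0 W2_0_1_t (by decide) (by decide) (by decide)

lemma d2_0_4 : EdgeDeletable O2B (0 : Fin 18) 4 :=
  isStrong_of_walk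
    (r := fun x y : Fin 18 => (x, y) ∈ A2b ∧
      ¬((x = 0 ∧ y = 4) ∨ (x = 4 ∧ y = 0)))
    0 W2_0_4_t (by decide) (by decide) (by decide)

lemma d2_0_5 : EdgeDeletable O2A (0 : Fin 18) 5 :=
  isStrong_of_walk
    (r := fun x y : Fin 18 => (x, y) ∈ A2a ∧
      ¬((x = 0 ∧ y = 5) ∨ (x = 5 ∧ y = 0)))
    0 W2_0_5_t (by decide) (by decide) (by decide)

lemma d2_1_2 : EdgeDeletable O2B (1 : Fin 18) 2 :=
  isStrong_of_walk
    (r := fun x y : Fin 18 => (x, y) ∈ A2b ∧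
      ¬((x = 1 ∧ y = 2) ∨ (x = 2 ∧ y = 1)))
    0 W2_1_2_t (by decide) (by decide) (by decide)

lemma d2_1_10 : EdgeDeletable O2A (1 : Fin 18) 10 :=
  isStrong_of_walk
    (r := fun x y : Fin 18 => (x, y) ∈ A2a ∧
      ¬((x = 1 ∧ y = 10) ∨ (x = 10 ∧ y = 1)))
    0 W2_1_10_t (by decide) (by decide) (by decide)

lemma d2_2_3 : EdgeDeletable O2A (2 : Fin 18) 3 :=
  isStrong_of_walk
    (r := fun x y : Fin 18 => (x, y) ∈ A2a ∧
      ¬((x = 2 ∧ y = 3) ∨ (x = 3 ∧ y = 2)))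
    0 W2_2_3_t (by decide) (by decide) (by decide)

lemma d2_2_7 : EdgeDeletable O2A (2 : Fin 18) 7 :=
  isStrong_of_walk
    (r := fun x y : Fin 18 => (x, y) ∈ A2a ∧
      ¬((x = 2 ∧ y = 7) ∨ (x = 7 ∧ y = 2)))
    0 W2_2_7_t (by decide) (by decide) (by decide)

lemma d2_3_8 : EdgeDeletable O2A (3 : Fin 18) 8 :=
  isStrong_of_walk
    (r := fun x y : Fin 18 => (x, y) ∈ A2a ∧
      ¬((x = 3 ∧ y = 8) ∨ (x = 8 ∧ y = 3)))
    0 W2_3_8_t (by decide) (by decide) (by decide)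

lemma d2_3_12 : EdgeDeletable O2B (3 : Fin 18) 12 :=
  isStrong_of_walk
    (r := fun x y : Fin 18 => (x, y) ∈ A2b ∧
      ¬((x = 3 ∧ y = 12) ∨ (x = 12 ∧ y = 3)))
    0 W2_3_12_t (by decide) (by decide) (by decide)

lemma d2_4_9 : EdgeDeletable O2A (4 : Fin 18) 9 :=
  isStrong_of_walk
    (r := fun x y : Fin 18 => (x, y) ∈ A2a ∧
      ¬((x = 4 ∧ y = 9) ∨ (x = 9 ∧ y = 4)))
    0 W2_4_9_t (by decide) (by decide) (by decide)

lemma d2_4_13 : EdgeDeletable O2A (4 : Fin 18) 13 :=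
  isStrong_of_walk
    (r := fun x y : Fin 18 => (x, y) ∈ A2a ∧
      ¬((x = 4 ∧ y = 13) ∨ (x = 13 ∧ y = 4)))
    0 W2_4_13_t (by decide) (by decide) (by decide)

lemma d2_5_7 : EdgeDeletable O2B (5 : Fin 18) 7 :=
  isStrong_of_walk
    (r := fun x y : Fin 18 => (x, y) ∈ A2b ∧
      ¬((x = 5 ∧ y = 7) ∨ (x = 7 ∧ y = 5)))
    0 W2_5_7_t (by decide) (by decide) (by decide)

lemma d2_5_8 : EdgeDeletable O2B (5 : Fin 18) 8 :=
  isStrong_of_walk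
    (r := fun x y : Fin 18 => (x, y) ∈ A2b ∧
      ¬((x = 5 ∧ y = 8) ∨ (x = 8 ∧ y = 5)))
    0 W2_5_8_t (by decide) (by decide) (by decide)

lemma d2_6_8 : EdgeDeletable O2A (6 : Fin 18) 8 :=
  isStrong_of_walk
    (r := fun x y : Fin 18 => (x, y) ∈ A2a ∧
      ¬((x = 6 ∧ y = 8) ∨ (x = 8 ∧ y = 6)))
    0 W2_6_8_t (by decide) (by decide) (by decide)

lemma d2_6_9 : EdgeDeletable O2B (6 : Fin 18) 9 :=
  isStrong_of_walk
    (r := fun x y : Fin 18 => (x, y) ∈ A2b ∧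
      ¬((x = 6 ∧ y = 9) ∨ (x = 9 ∧ y = 6)))
    0 W2_6_9_t (by decide) (by decide) (by decide)

lemma d2_6_14 : EdgeDeletable O2A (6 : Fin 18) 14 :=
  isStrong_of_walk
    (r := fun x y : Fin 18 => (x, y) ∈ A2a ∧
      ¬((x = 6 ∧ y = 14) ∨ (x = 14 ∧ y = 6)))
    0 W2_6_14_t (by decide) (by decide) (by decide)

lemma d2_7_9 : EdgeDeletable O2A (7 : Fin 18) 9 :=
  isStrong_of_walk
    (r := fun x y : Fin 18 => (x, y) ∈ A2a ∧
      ¬((x = 7 ∧ y = 9) ∨ (x = 9 ∧ y = 7)))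
    0 W2_7_9_t (by decide) (by decide) (by decide)

lemma d2_10_11 : EdgeDeletable O2B (10 : Fin 18) 11 :=
  isStrong_of_walk
    (r := fun x y : Fin 18 => (x, y) ∈ A2b ∧
      ¬((x = 10 ∧ y = 11) ∨ (x = 11 ∧ y = 10)))
    0 W2_10_11_t (by decide) (by decide) (by decide)

lemma d2_10_15 : EdgeDeletable O2A (10 : Fin 18) 15 :=
  isStrong_of_walk
    (r := fun x y : Fin 18 => (x, y) ∈ A2a ∧
      ¬((x = 10 ∧ y = 15) ∨ (x = 15 ∧ y = 10)))
    0 W2_10_15_t (by decide) (by decide) (by decide)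

lemma d2_11_12 : EdgeDeletable O2B (11 : Fin 18) 12 :=
  isStrong_of_walk
    (r := fun x y : Fin 18 => (x, y) ∈ A2b ∧
      ¬((x = 11 ∧ y = 12) ∨ (x = 12 ∧ y = 11)))
    0 W2_11_12_t (by decide) (by decide) (by decide)

lemma d2_11_16 : EdgeDeletable O2A (11 : Fin 18) 16 :=
  isStrong_of_walk
    (r := fun x y : Fin 18 => (x, y) ∈ A2a ∧
      ¬((x = 11 ∧ y = 16) ∨ (x = 16 ∧ y = 11)))
    0 W2_11_16_t (by decide) (by decide) (by decide)

lemma d2_12_17 : EdgeDeletable O2A (12 : Fin 18) 17 :=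
  isStrong_of_walk
    (r := fun x y : Fin 18 => (x, y) ∈ A2a ∧
      ¬((x = 12 ∧ y = 17) ∨ (x = 17 ∧ y = 12)))
    0 W2_12_17_t (by decide) (by decide) (by decide)

lemma d2_13_15 : EdgeDeletable O2A (13 : Fin 18) 15 :=
  isStrong_of_walk
    (r := fun x y : Fin 18 => (x, y) ∈ A2a ∧
      ¬((x = 13 ∧ y = 15) ∨ (x = 15 ∧ y = 13)))
    0 W2_13_15_t (by decide) (by decide) (by decide)

lemma d2_13_16 : EdgeDeletable O2B (13 : Fin 18) 16 :=
  isStrong_of_walk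
    (r := fun x y : Fin 18 => (x, y) ∈ A2b ∧
      ¬((x = 13 ∧ y = 16) ∨ (x = 16 ∧ y = 13)))
    0 W2_13_16_t (by decide) (by decide) (by decide)

lemma d2_14_16 : EdgeDeletable O2A (14 : Fin 18) 16 :=
  isStrong_of_walk
    (r := fun x y : Fin 18 => (x, y) ∈ A2a ∧
      ¬((x = 14 ∧ y = 16) ∨ (x = 16 ∧ y = 14)))
    0 W2_14_16_t (by decide) (by decide) (by decide)

lemma d2_14_17 : EdgeDeletable O2B (14 : Fin 18) 17 :=
  isStrong_of_walk
    (r := fun x y : Fin 18 => (x, y) ∈ A2b ∧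
      ¬((x = 14 ∧ y = 17) ∨ (x = 17 ∧ y = 14)))
    0 W2_14_17_t (by decide) (by decide) (by decide)

lemma d2_15_17 : EdgeDeletable O2B (15 : Fin 18) 17 :=
  isStrong_of_walk
    (r := fun x y : Fin 18 => (x, y) ∈ A2b ∧
      ¬((x = 15 ∧ y = 17) ∨ (x = 17 ∧ y = 15)))
    0 W2_15_17_t (by decide) (by decide) (by decide)

def Os2 : Fin 2 → Orient blanusa2 := ![O2A, O2B]

lemma cov2 : ∀ u v, blanusa2.Adj u v → ∃ i : Fin 2, EdgeDeletable (Os2 i) u v := by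
  have key : ∀ p ∈ E2def, ∃ i : Fin 2, EdgeDeletable (Os2 i) p.1 p.2 := by
    intro p hp
    fin_cases hp
    · exact ⟨0, d2_0_1⟩
    · exact ⟨1, d2_0_4⟩
    · exact ⟨0, d2_0_5⟩
    · exact ⟨1, d2_1_2⟩
    · exact ⟨0, d2_1_10⟩
    · exact ⟨0, d2_2_3⟩
    · exact ⟨0, d2_2_7⟩
    · exact ⟨0, d2_3_8⟩
    · exact ⟨1, d2_3_12⟩
    · exact ⟨0, d2_4_9⟩
    · exact ⟨0, d2_4_13⟩
    · exact ⟨1, d2_5_7⟩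
    · exact ⟨1, d2_5_8⟩
    · exact ⟨0, d2_6_8⟩
    · exact ⟨1, d2_6_9⟩
    · exact ⟨0, d2_6_14⟩
    · exact ⟨0, d2_7_9⟩
    · exact ⟨1, d2_10_11⟩
    · exact ⟨0, d2_10_15⟩
    · exact ⟨1, d2_11_12⟩
    · exact ⟨0, d2_11_16⟩
    · exact ⟨0, d2_12_17⟩
    · exact ⟨0, d2_13_15⟩
    · exact ⟨1, d2_13_16⟩
    · exact ⟨0, d2_14_16⟩
    · exact ⟨1, d2_14_17⟩
    · exact ⟨1, d2_15_17⟩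
  intro u v h
  rcases (adj2 u v).mp h with ⟨hne, h' | h'⟩
  · exact key (u, v) h'
  · obtain ⟨i, hi⟩ := key (v, u) h'
    exact ⟨i, edgeDeletable_symm hi⟩

lemma mem2_s17 : 2 ∈ {k | ∃ Os : Fin k → Orient blanusa2, (∀ i, IsStrong (Os i).dir) ∧
    ∀ u v, blanusa2.Adj u v → ∃ i, EdgeDeletable (Os i) u v} := by
  refine ⟨Os2, ?_, cov2⟩
  intro i
  fin_cases i
  · exact s2a
  · exact s2b

lemma hN2 : ∀ x : Fin 18, blanusa2.Adj 0 x ↔ x = 1 ∨ x = 4 ∨ x = 5 := by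
  intro x
  rw [adj2]
  revert x
  decide

lemma frank2 : frankNumber blanusa2 = 2 := by
  apply le_antisymm (Nat.sInf_le mem2_s17)
  apply le_csInf ⟨2, mem2_s17⟩
  rintro k ⟨Os, hs, hcov⟩
  by_contra hlt
  push_neg at hlt
  interval_cases k
  · obtain ⟨i, -⟩ := hcov 0 1 ((adj2 0 1).mpr (by decide))
    exact i.elim0
  · exact no_single (Os 0) hN2 (hs 0)
      (fun u v h => by
        obtain ⟨i, hi⟩ := hcov u v h
        rwa [Subsingleton.elim i 0] at hi)

theorem stmt_17 : frankNumber blanusa1 = 2 ∧ frankNumber blanusa2 = 2 :=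
  ⟨frank1, frank2⟩

end Frank
end
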